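/- arXiv:1306.2423 — 5 statements merged into one kernel-verified Lean document; each statement's English description precedes it below -/
import Mathlib

section
/- Let A be an n-by-n upper triangular matrix with zero diagonal except for the (n,n) entry equal to a, superdiagonal entries a_1, ..., a_{n−1} all nonzero, and all other entries zero; let B be the (n−1)-by-(n−1) matrix with superdiagonal entries a_1, ..., a_{n−2} and all other entries zero. Then w(A) > w(B). -/
open scoped Kronecker InnerProductSpace

/-- The operator norm (spectral norm) of a complex matrix, viewed as an operator
on Euclidean space. -/
noncomputable def opNorm {n : Type*} [Fintype n] [DecidableEq n] (A : Matrix n n ℂ) : ℝ :=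
  ‖Matrix.toEuclideanCLM (𝕜 := ℂ) A‖

/-- The numerical radius of a complex matrix: the supremum of `|⟨Ax, x⟩|` over
unit vectors `x`. -/
noncomputable def numRadius {n : Type*} [Fintype n] [DecidableEq n] (A : Matrix n n ℂ) : ℝ :=
  sSup {r : ℝ | ∃ x : EuclideanSpace ℂ n, ‖x‖ = 1 ∧
    r = ‖⟪x, Matrix.toEuclideanLin A x⟫_ℂ‖}

open Matrix

namespace Stmt12Aux

lemma sum_dirac {m : ℕ} {R : Type*} [AddCommMonoid R] (k : ℕ) (f : Fin m → R) :
    (∑ j : Fin m, if k = (j : ℕ) then f j else 0) = if h : k < m then f ⟨k, h⟩ else 0 := by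
  split_ifs with h
  · rw [Finset.sum_eq_single (⟨k, h⟩ : Fin m)]
    · simp
    · intro j _ hj
      rw [if_neg]
      exact fun hkj => hj (by simp [Fin.ext_iff, ← hkj])
    · simp
  · exact Finset.sum_eq_zero fun j _ => if_neg (by rintro rfl; exact h j.isLt)

lemma inner_toEuclideanLin {m : ℕ} (A : Matrix (Fin m) (Fin m) ℂ) (x : EuclideanSpace ℂ (Fin m)) :
    ⟪x, Matrix.toEuclideanLin A x⟫_ℂ =
      ∑ i : Fin m, ∑ j : Fin m, (starRingEnd ℂ) (x i) * A i j * x j := by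
  rw [PiLp.inner_apply]
  congr 1
  ext i
  simp [RCLike.inner_apply, Matrix.toEuclideanLin_apply, Matrix.mulVec, dotProduct,
    Finset.mul_sum, mul_assoc]
  rw [Finset.sum_mul]; exact Finset.sum_congr rfl fun j _ => by ring

lemma inner_toEuclideanLin_real {m : ℕ} (T : Matrix (Fin m) (Fin m) ℝ)
    (z : EuclideanSpace ℝ (Fin m)) :
    ⟪Matrix.toEuclideanLin T z, z⟫_ℝ = ∑ i : Fin m, ∑ j : Fin m, T i j * z j * z i := by
  rw [PiLp.inner_apply]
  congr 1
  ext i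
  simp [RCLike.inner_apply, Matrix.toEuclideanLin_apply, Matrix.mulVec, dotProduct,
    Finset.sum_mul, mul_assoc]
  rw [Finset.mul_sum]; exact Finset.sum_congr rfl fun j _ => by ring

lemma toEuclideanLin_coord {m : ℕ} (T : Matrix (Fin m) (Fin m) ℝ)
    (z : EuclideanSpace ℝ (Fin m)) (i : Fin m) :
    (Matrix.toEuclideanLin T z) i = ∑ j : Fin m, T i j * z j := by
  simp [Matrix.toEuclideanLin_apply, Matrix.mulVec, dotProduct]

lemma sum_sq_norm {ι : Type*} [Fintype ι] {𝕜 : Type*} [RCLike 𝕜] (x : EuclideanSpace 𝕜 ι) :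
    ∑ i, ‖x i‖ ^ 2 = ‖x‖ ^ 2 := by
  rw [EuclideanSpace.norm_eq, Real.sq_sqrt]
  positivity

noncomputable def phase (w : ℕ → ℂ) : ℕ → ℂ
  | 0 => 1
  | (k+1) => if w k = 0 then phase w k else phase w k * ((‖w k‖ : ℂ) / w k)

lemma phase_abs (w : ℕ → ℂ) (k : ℕ) : ‖phase w k‖ = 1 := by
  induction k with
  | zero => simp [phase]
  | succ k ih =>
    rw [phase]
    split_ifs with h
    · exact ih
    · rw [norm_mul, ih, norm_div, one_mul, Complex.norm_real,
        norm_norm, div_self]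
      simpa using h

lemma phase_conj_mul (w : ℕ → ℂ) (k : ℕ) :
    (starRingEnd ℂ) (phase w k) * phase w k = 1 := by
  rw [mul_comm, Complex.mul_conj, Complex.normSq_eq_norm_sq, phase_abs]
  norm_num

lemma phase_spec (w : ℕ → ℂ) (k : ℕ) (hk : w k ≠ 0) :
    (starRingEnd ℂ) (phase w k) * w k * phase w (k + 1) = (‖w k‖ : ℂ) := by
  rw [phase, if_neg hk]
  calc (starRingEnd ℂ) (phase w k) * w k * (phase w k * ((‖w k‖ : ℂ) / w k))
      = ((starRingEnd ℂ) (phase w k) * phase w k) * ((‖w k‖ : ℂ)) * (w k / w k) := by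
        ring
    _ = (‖w k‖ : ℂ) := by rw [phase_conj_mul, div_self hk]; ring

variable (M : ℕ) (w : ℕ → ℂ) (a : ℂ)

noncomputable def shiftB : Matrix (Fin (M + 1)) (Fin (M + 1)) ℂ :=
  fun i j => if (i : ℕ) + 1 = (j : ℕ) then w (i : ℕ) else 0

noncomputable def matA : Matrix (Fin (M + 2)) (Fin (M + 2)) ℂ :=
  fun i j => if (i : ℕ) + 1 = (j : ℕ) then w (i : ℕ)
    else if (i : ℕ) = M + 1 ∧ (j : ℕ) = M + 1 then a else 0

lemma quadB (x : EuclideanSpace ℂ (Fin (M + 1))) :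
    ⟪x, Matrix.toEuclideanLin (shiftB M w) x⟫_ℂ =
      ∑ i : Fin M, (starRingEnd ℂ) (x i.castSucc) * w (i : ℕ) * x i.succ := by
  rw [inner_toEuclideanLin]
  have h1 : ∀ i : Fin (M + 1),
      (∑ j : Fin (M + 1), (starRingEnd ℂ) (x i) * shiftB M w i j * x j) =
      if h : (i : ℕ) + 1 < M + 1 then (starRingEnd ℂ) (x i) * w (i : ℕ) * x ⟨(i : ℕ) + 1, h⟩
        else 0 := by
    intro i
    rw [← sum_dirac ((i : ℕ) + 1) (fun j => (starRingEnd ℂ) (x i) * w (i : ℕ) * x j)]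
    refine Finset.sum_congr rfl fun j _ => ?_
    simp only [shiftB]
    split_ifs <;> ring
  rw [Finset.sum_congr rfl fun i _ => h1 i, Fin.sum_univ_castSucc]
  simp only [Fin.coe_castSucc, Fin.val_last]
  rw [dif_neg (by omega), add_zero]
  refine Finset.sum_congr rfl fun i _ => ?_
  rw [dif_pos (by omega)]
  congr 1

lemma quadA (x : EuclideanSpace ℂ (Fin (M + 2))) :
    ⟪x, Matrix.toEuclideanLin (matA M w a) x⟫_ℂ =
      (∑ i : Fin (M + 1), (starRingEnd ℂ) (x i.castSucc) * w (i : ℕ) * x i.succ)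
        + a * ((starRingEnd ℂ) (x (Fin.last (M + 1))) * x (Fin.last (M + 1))) := by
  rw [inner_toEuclideanLin]
  have h1 : ∀ i : Fin (M + 2),
      (∑ j : Fin (M + 2), (starRingEnd ℂ) (x i) * matA M w a i j * x j) =
      (if h : (i : ℕ) + 1 < M + 2 then (starRingEnd ℂ) (x i) * w (i : ℕ) * x ⟨(i : ℕ) + 1, h⟩
        else 0)
        + (if (i : ℕ) = M + 1 then (starRingEnd ℂ) (x i) * a * x i else 0) := by
    intro i
    have h2 : ∀ j : Fin (M + 2), (starRingEnd ℂ) (x i) * matA M w a i j * x j =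
        (if (i : ℕ) + 1 = (j : ℕ) then (starRingEnd ℂ) (x i) * w (i : ℕ) * x j else 0)
          + (if ((i : ℕ) = M + 1 ∧ (j : ℕ) = M + 1) then (starRingEnd ℂ) (x i) * a * x j
            else 0) := by
      intro j
      simp only [matA]
      split_ifs with hp hq <;> first | (exfalso; omega) | ring
    rw [Finset.sum_congr rfl fun j _ => h2 j, Finset.sum_add_distrib]
    congr 1
    · rw [← sum_dirac ((i : ℕ) + 1) (fun j => (starRingEnd ℂ) (x i) * w (i : ℕ) * x j)]
    · by_cases hP : (i : ℕ) = M + 1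
      · have hi : i = ⟨M + 1, by omega⟩ := Fin.ext (by simpa using hP)
        calc (∑ j : Fin (M + 2), if ((i : ℕ) = M + 1 ∧ (j : ℕ) = M + 1)
                then (starRingEnd ℂ) (x i) * a * x j else 0)
            = ∑ j : Fin (M + 2), if M + 1 = (j : ℕ) then (starRingEnd ℂ) (x i) * a * x j
                else 0 := by
              refine Finset.sum_congr rfl fun j _ => ?_
              congr 1
              simp [hP, eq_comm]
          _ = if h : M + 1 < M + 2 then (starRingEnd ℂ) (x i) * a * x ⟨M + 1, h⟩ else 0 :=
              sum_dirac _ _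
          _ = (starRingEnd ℂ) (x i) * a * x i := by rw [dif_pos (by omega), ← hi]
          _ = if (i : ℕ) = M + 1 then (starRingEnd ℂ) (x i) * a * x i else 0 := (if_pos hP).symm
      · simp [hP]
  rw [Finset.sum_congr rfl fun i _ => h1 i, Finset.sum_add_distrib]
  congr 1
  · rw [Fin.sum_univ_castSucc]
    simp only [Fin.coe_castSucc, Fin.val_last]
    rw [dif_neg (by omega), add_zero]
    refine Finset.sum_congr rfl fun i _ => ?_
    rw [dif_pos (by omega)]
    congr 1
  · calc (∑ i : Fin (M + 2), if (i : ℕ) = M + 1 then (starRingEnd ℂ) (x i) * a * x i else 0)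
        = ∑ i : Fin (M + 2), if M + 1 = (i : ℕ) then (starRingEnd ℂ) (x i) * a * x i else 0 := by
          refine Finset.sum_congr rfl fun i _ => ?_
          congr 1
          simp [eq_comm]
      _ = if h : M + 1 < M + 2 then (starRingEnd ℂ) (x ⟨M + 1, h⟩) * a * x ⟨M + 1, h⟩ else 0 :=
          sum_dirac _ _
      _ = a * ((starRingEnd ℂ) (x (Fin.last (M + 1))) * x (Fin.last (M + 1))) := by
          rw [dif_pos (by omega)]
          have : (⟨M + 1, by omega⟩ : Fin (M + 2)) = Fin.last (M + 1) := rfl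
          rw [this]; ring

noncomputable def Sm : Matrix (Fin (M + 1)) (Fin (M + 1)) ℝ :=
  fun i j => if (i : ℕ) + 1 = (j : ℕ) then ‖w (i : ℕ)‖ else 0

noncomputable def Tm : Matrix (Fin (M + 1)) (Fin (M + 1)) ℝ :=
  (2⁻¹ : ℝ) • (Sm M w + (Sm M w)ᵀ)

noncomputable def gform (z : EuclideanSpace ℝ (Fin (M + 1))) : ℝ :=
  ∑ i : Fin M, ‖w (i : ℕ)‖ * z i.castSucc * z i.succ

lemma Tm_herm : (Tm M w).IsHermitian := by
  ext i j
  simp only [Tm, Matrix.conjTranspose_apply, Matrix.smul_apply, Matrix.add_apply,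
    Matrix.transpose_apply, star_trivial, smul_eq_mul]
  ring

lemma sum_shiftS (z : EuclideanSpace ℝ (Fin (M + 1))) :
    (∑ i : Fin (M + 1), ∑ j : Fin (M + 1), Sm M w i j * z j * z i) = gform M w z := by
  have h1 : ∀ i : Fin (M + 1), (∑ j : Fin (M + 1), Sm M w i j * z j * z i) =
      if h : (i : ℕ) + 1 < M + 1 then ‖w (i : ℕ)‖ * z ⟨(i : ℕ) + 1, h⟩ * z i
        else 0 := by
    intro i
    rw [← sum_dirac ((i : ℕ) + 1) (fun j => ‖w (i : ℕ)‖ * z j * z i)]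
    refine Finset.sum_congr rfl fun j _ => ?_
    simp only [Sm]
    split_ifs <;> ring
  rw [Finset.sum_congr rfl fun i _ => h1 i, Fin.sum_univ_castSucc]
  simp only [Fin.coe_castSucc, Fin.val_last]
  rw [dif_neg (by omega), add_zero]
  refine Finset.sum_congr rfl fun i _ => ?_
  rw [dif_pos (by omega)]
  have : (⟨(i : ℕ) + 1, by omega⟩ : Fin (M + 1)) = i.succ := rfl
  rw [this]
  ring

lemma quadT (z : EuclideanSpace ℝ (Fin (M + 1))) :
    ⟪Matrix.toEuclideanLin (Tm M w) z, z⟫_ℝ = gform M w z := by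
  rw [inner_toEuclideanLin_real]
  have : ∀ i j : Fin (M + 1), Tm M w i j * z j * z i =
      2⁻¹ * (Sm M w i j * z j * z i) + 2⁻¹ * (Sm M w j i * z j * z i) := by
    intro i j
    simp only [Tm, Matrix.smul_apply, Matrix.add_apply, Matrix.transpose_apply, smul_eq_mul]
    ring
  simp_rw [this, Finset.sum_add_distrib, ← Finset.mul_sum]
  rw [sum_shiftS]
  have h2 : (∑ i : Fin (M + 1), ∑ j : Fin (M + 1), Sm M w j i * z j * z i) = gform M w z := by
    rw [Finset.sum_comm]
    calc (∑ j : Fin (M + 1), ∑ i : Fin (M + 1), Sm M w j i * z j * z i)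
        = ∑ j : Fin (M + 1), ∑ i : Fin (M + 1), Sm M w j i * z i * z j := by
          refine Finset.sum_congr rfl fun j _ => Finset.sum_congr rfl fun i _ => by ring
      _ = gform M w z := sum_shiftS M w z
  rw [h2]
  ring

lemma compT (z : EuclideanSpace ℝ (Fin (M + 1))) (k : ℕ) (hk : k + 1 < M + 1) :
    (Matrix.toEuclideanLin (Tm M w) z) ⟨k + 1, hk⟩ =
      2⁻¹ * ((if h : k + 2 < M + 1 then ‖w (k + 1)‖ * z ⟨k + 2, h⟩ else 0)
        + ‖w k‖ * z ⟨k, by omega⟩) := by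
  rw [toEuclideanLin_coord]
  have : ∀ j : Fin (M + 1), Tm M w ⟨k + 1, hk⟩ j * z j =
      2⁻¹ * ((if k + 1 + 1 = (j : ℕ) then ‖w (k + 1)‖ * z j else 0)
        + (if k = (j : ℕ) then ‖w (j : ℕ)‖ * z j else 0)) := by
    intro j
    simp only [Tm, Matrix.smul_apply, Matrix.add_apply, Matrix.transpose_apply, Sm,
      smul_eq_mul, Fin.val_mk]
    split_ifs <;>
      first
        | (exfalso; omega)
        | ring
        | (have hjk : (j : ℕ) = k := by omega; rw [hjk]; ring)
  rw [Finset.sum_congr rfl fun j _ => this j, ← Finset.mul_sum, Finset.sum_add_distrib]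
  congr 1
  rw [sum_dirac (k + 1 + 1) (fun j => ‖w (k + 1)‖ * z j),
    sum_dirac k (fun j => ‖w (j : ℕ)‖ * z j), dif_pos (show k < M + 1 by omega)]

lemma norm_one_of_sum {ι : Type*} [Fintype ι] {𝕜 : Type*} [RCLike 𝕜]
    (x : EuclideanSpace 𝕜 ι) (h : ∑ i, ‖x i‖ ^ 2 = 1) : ‖x‖ = 1 := by
  have h2 := sum_sq_norm x
  nlinarith [norm_nonneg x]

set_option maxHeartbeats 1600000 in
lemma key (hw : ∀ i, i < M + 1 → w i ≠ 0) :
    numRadius (shiftB M w) < numRadius (matA M w a) := by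
  classical
  have hcont : Continuous fun x : EuclideanSpace ℂ (Fin (M + 1)) =>
      ‖⟪x, Matrix.toEuclideanLin (shiftB M w) x⟫_ℂ‖ :=
    continuous_norm.comp (Continuous.inner continuous_id
      (Matrix.toEuclideanLin (shiftB M w)).continuous_of_finiteDimensional)
  have hsph : (Metric.sphere (0 : EuclideanSpace ℂ (Fin (M + 1))) 1).Nonempty :=
    ⟨EuclideanSpace.single 0 1, by simp [mem_sphere_zero_iff_norm, EuclideanSpace.norm_single]⟩
  obtain ⟨x₀, hx₀s, hmax⟩ :=
    (isCompact_sphere (0 : EuclideanSpace ℂ (Fin (M + 1))) 1).exists_isMaxOn hsph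
      hcont.continuousOn
  have hx₀n : ‖x₀‖ = 1 := mem_sphere_zero_iff_norm.mp hx₀s
  set m := ‖⟪x₀, Matrix.toEuclideanLin (shiftB M w) x₀⟫_ℂ‖ with hmdef
  have hm0 : 0 ≤ m := norm_nonneg _
  set y : EuclideanSpace ℝ (Fin (M + 1)) := WithLp.toLp 2 (fun i => ‖x₀ i‖) with hydef
  have hy0 : ∀ i, 0 ≤ y i := fun i => norm_nonneg _
  have hyn : ‖y‖ = 1 := by
    apply norm_one_of_sum
    have hx2 : ∑ i, ‖x₀ i‖ ^ 2 = 1 := by rw [sum_sq_norm, hx₀n, one_pow]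
    rw [← hx2]
    refine Finset.sum_congr rfl fun i _ => ?_
    simp [hydef, Real.norm_eq_abs, abs_of_nonneg (norm_nonneg _)]
  -- step 3 : m ≤ gform y
  have h3 : m ≤ gform M w y := by
    rw [hmdef, quadB]
    refine le_trans (norm_sum_le _ _) (le_of_eq ?_)
    refine Finset.sum_congr rfl fun i _ => ?_
    simp only [norm_mul, Complex.norm_conj, gform, hydef]
    ring
  -- step 4 : gform z ≤ m for all unit real z
  have hgle : ∀ z : EuclideanSpace ℝ (Fin (M + 1)), ‖z‖ = 1 → gform M w z ≤ m := by
    intro z hz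
    set u : EuclideanSpace ℂ (Fin (M + 1)) := WithLp.toLp 2 (fun i => phase w (i : ℕ) * ((z i : ℝ) : ℂ))
      with hudef
    have hun : ‖u‖ = 1 := by
      apply norm_one_of_sum
      have hz2 : ∑ i, ‖z i‖ ^ 2 = 1 := by rw [sum_sq_norm, hz, one_pow]
      rw [← hz2]
      refine Finset.sum_congr rfl fun i _ => ?_
      simp [hudef, norm_mul, phase_abs, Complex.norm_real,
        Real.norm_eq_abs]
    have hq : ⟪u, Matrix.toEuclideanLin (shiftB M w) u⟫_ℂ = ((gform M w z : ℝ) : ℂ) := by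
      rw [quadB]
      simp only [gform]
      push_cast
      refine Finset.sum_congr rfl fun i _ => ?_
      have hiv : ((i.succ : Fin (M + 1)) : ℕ) = (i : ℕ) + 1 := rfl
      simp only [hudef, Fin.coe_castSucc, hiv, _root_.map_mul, Complex.conj_ofReal]
      have hspec := phase_spec w (i : ℕ) (hw _ (by omega))
      linear_combination
        ((z i.castSucc : ℝ) : ℂ) * ((z i.succ : ℝ) : ℂ) * hspec
    have h5 : gform M w z ≤ ‖⟪u, Matrix.toEuclideanLin (shiftB M w) u⟫_ℂ‖ := by
      rw [hq, Complex.norm_real, Real.norm_eq_abs]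
      exact le_abs_self _
    exact le_trans h5 (hmax (mem_sphere_zero_iff_norm.mpr hun))
  have hgy : gform M w y = m := le_antisymm (hgle y hyn) h3
  -- Rayleigh
  set T : EuclideanSpace ℝ (Fin (M + 1)) →L[ℝ] EuclideanSpace ℝ (Fin (M + 1)) :=
    LinearMap.toContinuousLinearMap (Matrix.toEuclideanLin (Tm M w)) with hTdef
  have hT : IsSelfAdjoint T := by
    rw [ContinuousLinearMap.isSelfAdjoint_iff_isSymmetric]
    have h := Matrix.isHermitian_iff_isSymmetric.mp (Tm_herm M w)
    simpa [hTdef, LinearMap.coe_toContinuousLinearMap] using h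
  have hre : ∀ z, T.reApplyInnerSelf z = gform M w z := by
    intro z
    simp only [ContinuousLinearMap.reApplyInnerSelf]
    have : (T z : EuclideanSpace ℝ (Fin (M + 1))) = Matrix.toEuclideanLin (Tm M w) z := rfl
    rw [this, quadT]
    rfl
  have hmaxon : IsMaxOn T.reApplyInnerSelf (Metric.sphere (0 : EuclideanSpace ℝ (Fin (M + 1))) ‖y‖) y := by
    intro z hz
    have hz1 : ‖z‖ = 1 := by
      have := mem_sphere_zero_iff_norm.mp hz
      rwa [hyn] at this
    show T.reApplyInnerSelf z ≤ T.reApplyInnerSelf y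
    rw [hre, hre, hgy]
    exact hgle z hz1
  have heig := hT.eq_smul_self_of_isLocalExtrOn (Or.inr hmaxon.localize)
  have hray : T.rayleighQuotient y = m := by
    simp only [ContinuousLinearMap.rayleighQuotient, hre, hyn, hgy]
    norm_num
  have hcomp : ∀ i, (Matrix.toEuclideanLin (Tm M w) y) i = m * y i := by
    intro i
    have h1 : (Matrix.toEuclideanLin (Tm M w) y) i = (T y) i := rfl
    rw [h1, heig, hray]
    simp
  -- positivity of the last entry of y
  have hyM : 0 < y ⟨M, by omega⟩ := by
    rcases (hy0 ⟨M, by omega⟩).lt_or_eq with h | h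
    · exact h
    have hzero : y ⟨M, by omega⟩ = 0 := h.symm
    exfalso
    have hall : ∀ k, k ≤ M → y ⟨M - k, by omega⟩ = 0 := by
      intro k
      induction k with
      | zero => intro _; exact hzero
      | succ k ih =>
        intro hk1
        have hprev := ih (by omega)
        have hlt : (M - (k + 1)) + 1 < M + 1 := by omega
        have hcy := hcomp ⟨(M - (k + 1)) + 1, hlt⟩
        rw [compT M w y (M - (k + 1)) hlt] at hcy
        have hyz : y ⟨M - (k + 1) + 1, hlt⟩ = 0 := by
          have he : (⟨M - (k + 1) + 1, hlt⟩ : Fin (M + 1)) = ⟨M - k, by omega⟩ :=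
            Fin.ext (by simp; omega)
          rw [he]
          exact hprev
        rw [hyz, mul_zero] at hcy
        have ht1 : 0 ≤ (if h : M - (k + 1) + 2 < M + 1
            then ‖w (M - (k + 1) + 1)‖ * y ⟨M - (k + 1) + 2, h⟩ else 0) := by
          split_ifs
          · exact mul_nonneg (norm_nonneg _) (hy0 _)
          · exact le_refl 0
        have ht2 : 0 ≤ ‖w (M - (k + 1))‖ * y ⟨M - (k + 1), by omega⟩ :=
          mul_nonneg (norm_nonneg _) (hy0 _)
        have hz2 : ‖w (M - (k + 1))‖ * y ⟨M - (k + 1), by omega⟩ = 0 := by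
          linarith
        have hwpos : 0 < ‖w (M - (k + 1))‖ :=
          norm_pos_iff.mpr (hw _ (by omega))
        exact (mul_eq_zero.mp hz2).resolve_left (ne_of_gt hwpos)
    have hy_eq : y = 0 := by
      ext i
      have hi := hall (M - (i : ℕ)) (by omega)
      have he : (⟨M - (M - (i : ℕ)), by omega⟩ : Fin (M + 1)) = i := Fin.ext (by simp; omega)
      rw [he] at hi
      exact hi
    rw [hy_eq, norm_zero] at hyn
    norm_num at hyn
  -- construction of the perturbed vector
  have hwM : 0 < ‖w M‖ := norm_pos_iff.mpr (hw M (by omega))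
  set C := ‖w M‖ * y ⟨M, by omega⟩ with hCdef
  have hC : 0 < C := mul_pos hwM hyM
  set D := 2 * (1 + |a.re| + m) with hDdef
  have hDpos : 0 < D := by positivity
  set ε := min 1 (C / D) with hεdef
  have hε0 : 0 < ε := lt_min one_pos (div_pos hC hDpos)
  have hεD : ε * D ≤ C := by
    have h1 : ε ≤ C / D := min_le_right _ _
    rwa [← le_div_iff₀ hDpos]
  have hkey : 0 < C + (a.re - m) * ε := by
    have hεD' : ε * (2 * (1 + |a.re| + m)) ≤ C := by rw [← hDdef]; exact hεD
    nlinarith [hε0, hm0, abs_nonneg a.re,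
      mul_le_mul_of_nonneg_right (neg_abs_le a.re) hε0.le,
      mul_nonneg hε0.le (abs_nonneg a.re), mul_nonneg hε0.le hm0]
  set s := Real.sqrt (1 + ε ^ 2) with hsdef
  have h1e : (0:ℝ) < 1 + ε ^ 2 := by positivity
  have hs0 : 0 < s := Real.sqrt_pos.mpr h1e
  have hs2 : s ^ 2 = 1 + ε ^ 2 := Real.sq_sqrt (le_of_lt h1e)
  set x : EuclideanSpace ℂ (Fin (M + 2)) := WithLp.toLp 2 (fun i =>
    ((s⁻¹ : ℝ) : ℂ) * (if h : (i : ℕ) < M + 1 then phase w (i : ℕ) * ((y ⟨(i : ℕ), h⟩ : ℝ) : ℂ)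
      else phase w (M + 1) * ((ε : ℝ) : ℂ))) with hxdef
  have hxcoord : ∀ i : Fin (M + 2), ‖x i‖ ^ 2 =
      (s⁻¹) ^ 2 * (if h : (i : ℕ) < M + 1 then (y ⟨(i : ℕ), h⟩) ^ 2 else ε ^ 2) := by
    intro i
    by_cases h : (i : ℕ) < M + 1
    · rw [hxdef]
      simp only [dif_pos h]
      rw [norm_mul, norm_mul, Complex.norm_real, Complex.norm_real,
        phase_abs, one_mul, Real.norm_eq_abs, Real.norm_eq_abs,
        abs_of_nonneg (inv_nonneg.mpr hs0.le), abs_of_nonneg (hy0 _)]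
      ring
    · rw [hxdef]
      simp only [dif_neg h]
      rw [norm_mul, norm_mul, Complex.norm_real, Complex.norm_real,
        phase_abs, one_mul, Real.norm_eq_abs, Real.norm_eq_abs,
        abs_of_nonneg (inv_nonneg.mpr hs0.le), abs_of_nonneg hε0.le]
      ring
  have hxn : ‖x‖ = 1 := by
    apply norm_one_of_sum
    rw [Finset.sum_congr rfl fun i _ => hxcoord i, ← Finset.mul_sum, Fin.sum_univ_castSucc]
    simp only [Fin.coe_castSucc, Fin.val_last]
    rw [dif_neg (by omega)]
    have hsum : (∑ i : Fin (M + 1),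
        if h : (i : ℕ) < M + 1 then (y ⟨(i : ℕ), h⟩) ^ 2 else ε ^ 2) = 1 := by
      have : ∀ i : Fin (M + 1),
          (if h : (i : ℕ) < M + 1 then (y ⟨(i : ℕ), h⟩) ^ 2 else ε ^ 2) = ‖y i‖ ^ 2 := by
        intro i
        rw [dif_pos i.isLt]
        rw [Real.norm_eq_abs, sq_abs]
      rw [Finset.sum_congr rfl fun i _ => this i, sum_sq_norm, hyn, one_pow]
    rw [hsum]
    rw [← hs2]
    field_simp
  -- quadratic form at x
  have hqa : ⟪x, Matrix.toEuclideanLin (matA M w a) x⟫_ℂ =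
      (((1 + ε ^ 2)⁻¹ : ℝ) : ℂ) * (((m + C * ε : ℝ) : ℂ) + a * ((ε ^ 2 : ℝ) : ℂ)) := by
    rw [quadA]
    have hterm : ∀ i : Fin (M + 1),
        (starRingEnd ℂ) (x i.castSucc) * w (i : ℕ) * x i.succ =
        (((s⁻¹ ^ 2 : ℝ)) : ℂ) * (if h : (i : ℕ) + 1 < M + 1
          then ((‖w (i : ℕ)‖ * y ⟨(i : ℕ), by omega⟩ * y ⟨(i : ℕ) + 1, h⟩ : ℝ) : ℂ)
          else ((C * ε : ℝ) : ℂ)) := by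
      intro i
      have hc1 : x i.castSucc =
          ((s⁻¹ : ℝ) : ℂ) * (phase w (i : ℕ) * ((y ⟨(i : ℕ), by omega⟩ : ℝ) : ℂ)) := by
        rw [hxdef]
        simp only [Fin.coe_castSucc]
        rw [dif_pos (by omega : (i : ℕ) < M + 1)]
      by_cases h : (i : ℕ) + 1 < M + 1
      · have hc2 : x i.succ =
            ((s⁻¹ : ℝ) : ℂ) * (phase w ((i : ℕ) + 1) * ((y ⟨(i : ℕ) + 1, h⟩ : ℝ) : ℂ)) := by
          rw [hxdef]
          simp only [Fin.val_succ]
          rw [dif_pos h]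
        rw [hc1, hc2, dif_pos h]
        have hspec := phase_spec w (i : ℕ) (hw _ (by omega))
        push_cast
        simp only [_root_.map_mul, map_inv₀, Complex.conj_ofReal]
        linear_combination ((((s : ℝ) : ℂ))⁻¹ * (((s : ℝ) : ℂ))⁻¹ *
          ((y ⟨(i : ℕ), by omega⟩ : ℝ) : ℂ) * ((y ⟨(i : ℕ) + 1, h⟩ : ℝ) : ℂ)) * hspec
      · have hiM : (i : ℕ) = M := by omega
        have hiL : i = Fin.last M := Fin.ext (by simpa using hiM)
        have hc2 : x i.succ = ((s⁻¹ : ℝ) : ℂ) * (phase w (M + 1) * ((ε : ℝ) : ℂ)) := by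
          rw [hxdef]
          simp only [Fin.val_succ]
          rw [dif_neg (by omega)]
        rw [dif_neg h, hc1, hc2, hCdef]
        have hfin : (⟨(i : ℕ), by omega⟩ : Fin (M + 1)) = ⟨M, by omega⟩ :=
          Fin.ext (by simpa using hiM)
        rw [hfin, hiM]
        have hspec := phase_spec w M (hw M (by omega))
        push_cast
        simp only [_root_.map_mul, map_inv₀, Complex.conj_ofReal]
        linear_combination ((((s : ℝ) : ℂ))⁻¹ * (((s : ℝ) : ℂ))⁻¹ *
          ((y ⟨M, by omega⟩ : ℝ) : ℂ) * ((ε : ℝ) : ℂ)) * hspec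
    rw [Finset.sum_congr rfl fun i _ => hterm i, Fin.sum_univ_castSucc]
    simp only [Fin.coe_castSucc, Fin.val_last]
    rw [dif_neg (by omega), ← Finset.mul_sum]
    have hsum2 : (∑ i : Fin M, if h : (i : ℕ) + 1 < M + 1
        then ((‖w (i : ℕ)‖ * y ⟨(i : ℕ), by omega⟩ * y ⟨(i : ℕ) + 1, h⟩ : ℝ) : ℂ)
        else ((C * ε : ℝ) : ℂ)) = ((gform M w y : ℝ) : ℂ) := by
      rw [show ((gform M w y : ℝ) : ℂ) =
          ∑ i : Fin M, ((‖w (i : ℕ)‖ * y i.castSucc * y i.succ : ℝ) : ℂ) by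
        rw [gform]; push_cast; rfl]
      refine Finset.sum_congr rfl fun i _ => ?_
      rw [dif_pos (by omega : (i : ℕ) + 1 < M + 1)]
      congr 1
    rw [hsum2]
    have hlast : (starRingEnd ℂ) (x (Fin.last (M + 1))) * x (Fin.last (M + 1)) =
        (((s⁻¹ ^ 2 : ℝ)) : ℂ) * ((ε ^ 2 : ℝ) : ℂ) := by
      have hc3 : x (Fin.last (M + 1)) = ((s⁻¹ : ℝ) : ℂ) * (phase w (M + 1) * ((ε : ℝ) : ℂ)) := by
        rw [hxdef]
        simp only [Fin.val_last]
        rw [dif_neg (by omega)]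
      rw [hc3]
      have hpc := phase_conj_mul w (M + 1)
      push_cast
      simp only [_root_.map_mul, map_inv₀, Complex.conj_ofReal]
      linear_combination ((((s : ℝ) : ℂ))⁻¹ * (((s : ℝ) : ℂ))⁻¹ * ((ε : ℝ) : ℂ) ^ 2) * hpc
    rw [hlast, hgy]
    have hsinv : ((s⁻¹ ^ 2 : ℝ) : ℂ) = (((1 + ε ^ 2)⁻¹ : ℝ) : ℂ) := by
      have hre : s⁻¹ ^ 2 = (1 + ε ^ 2)⁻¹ := by rw [inv_pow, hs2]
      rw [hre]
    rw [hsinv]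
    push_cast
    ring
  -- conclude
  have hRe : (⟪x, Matrix.toEuclideanLin (matA M w a) x⟫_ℂ).re =
      (1 + ε ^ 2)⁻¹ * (m + C * ε + a.re * ε ^ 2) := by
    have hgen : ∀ r p q : ℝ, (((r : ℝ) : ℂ) * (((p : ℝ) : ℂ) + a * ((q : ℝ) : ℂ))).re =
        r * (p + a.re * q) := by
      intro r p q
      simp [Complex.mul_re, Complex.add_re, Complex.add_im, Complex.mul_im,
        Complex.ofReal_re, Complex.ofReal_im]
      try ring
    rw [hqa, hgen]
    try ring
  have hstrict : m < ‖⟪x, Matrix.toEuclideanLin (matA M w a) x⟫_ℂ‖ := by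
    have h6 : m < (1 + ε ^ 2)⁻¹ * (m + C * ε + a.re * ε ^ 2) := by
      rw [inv_mul_eq_div, lt_div_iff₀ h1e]
      nlinarith [mul_pos hkey hε0]
    calc m < (1 + ε ^ 2)⁻¹ * (m + C * ε + a.re * ε ^ 2) := h6
      _ = (⟪x, Matrix.toEuclideanLin (matA M w a) x⟫_ℂ).re := hRe.symm
      _ ≤ ‖⟪x, Matrix.toEuclideanLin (matA M w a) x⟫_ℂ‖ := Complex.re_le_norm _
  have hub : numRadius (shiftB M w) = m := by
    unfold numRadius
    apply IsGreatest.csSup_eq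
    constructor
    · exact ⟨x₀, hx₀n, hmdef⟩
    · rintro r ⟨z, hz, rfl⟩
      exact hmax (mem_sphere_zero_iff_norm.mpr hz)
  have hlb : ‖⟪x, Matrix.toEuclideanLin (matA M w a) x⟫_ℂ‖ ≤
      numRadius (matA M w a) := by
    unfold numRadius
    apply le_csSup
    · refine ⟨‖Matrix.toEuclideanCLM (𝕜 := ℂ) (matA M w a)‖, ?_⟩
      rintro r ⟨z, hz, rfl⟩
      have hzz : Matrix.toEuclideanLin (matA M w a) z =
          Matrix.toEuclideanCLM (𝕜 := ℂ) (matA M w a) z := by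
        rw [← Matrix.coe_toEuclideanCLM_eq_toEuclideanLin]
        rfl
      calc ‖⟪z, Matrix.toEuclideanLin (matA M w a) z⟫_ℂ‖
          = ‖⟪z, Matrix.toEuclideanLin (matA M w a) z⟫_ℂ‖ := rfl
        _ ≤ ‖z‖ * ‖Matrix.toEuclideanLin (matA M w a) z‖ := norm_inner_le_norm _ _
        _ = ‖Matrix.toEuclideanCLM (𝕜 := ℂ) (matA M w a) z‖ := by rw [hz, one_mul, hzz]
        _ ≤ ‖Matrix.toEuclideanCLM (𝕜 := ℂ) (matA M w a)‖ * ‖z‖ :=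
            ContinuousLinearMap.le_opNorm _ _
        _ = ‖Matrix.toEuclideanCLM (𝕜 := ℂ) (matA M w a)‖ := by rw [hz, mul_one]
    · exact ⟨x, hxn, rfl⟩
  rw [hub]
  exact lt_of_lt_of_le hstrict hlb


end Stmt12Aux

theorem stmt12 (n : ℕ) (hn : 2 ≤ n) (a : ℂ) (w : ℕ → ℂ)
    (hw : ∀ i : ℕ, i < n - 1 → w i ≠ 0)
    (A : Matrix (Fin n) (Fin n) ℂ)
    (hA : A = fun (i j : Fin n) => if (i : ℕ) + 1 = (j : ℕ) then w (i : ℕ)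
      else if (i : ℕ) = n - 1 ∧ (j : ℕ) = n - 1 then a else 0)
    (B : Matrix (Fin (n - 1)) (Fin (n - 1)) ℂ)
    (hB : B = fun (i j : Fin (n - 1)) => if (i : ℕ) + 1 = (j : ℕ) then w (i : ℕ) else 0) :
    numRadius B < numRadius A := by
  obtain ⟨M, rfl⟩ : ∃ M, n = M + 2 := ⟨n - 2, by omega⟩
  subst hA hB
  have hw' : ∀ i, i < M + 1 → w i ≠ 0 := fun i hi => hw i (by omega)
  exact Stmt12Aux.key M w a hw'
end

section
/- Let A be an n-by-n complex matrix with ‖A‖ = 1 such that ‖A^k‖ = 1 and A^{k+1} = 0, where k = sup{j : ‖A^j‖ = 1} = sup{j : A^j ≠ 0} < ∞. Then A is unitarily similar to J_{k+1} ⊕ B where B^{k+1} = 0. -/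
open scoped Kronecker InnerProductSpace

/-- `A` and `B` are unitarily similar (as operators on Euclidean spaces, allowing
different index types of the same dimension). -/
def UnitSim {n m : Type*} [Fintype n] [DecidableEq n] [Fintype m] [DecidableEq m]
    (A : Matrix n n ℂ) (B : Matrix m m ℂ) : Prop :=
  ∃ e : EuclideanSpace ℂ n ≃ₗᵢ[ℂ] EuclideanSpace ℂ m,
    ∀ x, Matrix.toEuclideanLin B (e x) = e (Matrix.toEuclideanLin A x)

/-- The `m`-by-`m` nilpotent Jordan block: zero diagonal, ones on the superdiagonal. -/
def Jordan (m : ℕ) : Matrix (Fin m) (Fin m) ℂ :=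
  fun i j => if (i : ℕ) + 1 = (j : ℕ) then 1 else 0

section Aux

variable {E : Type*} [NormedAddCommGroup E] [InnerProductSpace ℂ E] [FiniteDimensional ℂ E]

open ContinuousLinearMap in
/-- If `‖T‖ ≤ 1` and `‖v‖ = ‖T v‖ = 1` then `T† (T v) = v`. -/
theorem aux_adjoint_apply (T : E →L[ℂ] E) (hT : ‖T‖ ≤ 1) (v : E) (hv : ‖v‖ = 1)
    (hTv : ‖T v‖ = 1) : adjoint T (T v) = v := by
  set u := adjoint T (T v) with hu
  have hinner : ⟪v, u⟫_ℂ = 1 := by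
    rw [hu, adjoint_inner_right, inner_self_eq_norm_sq_to_K, hTv]
    norm_num
  have hadj : ‖adjoint T‖ ≤ 1 := by
    rw [show ‖adjoint T‖ = ‖T‖ from (adjoint (𝕜 := ℂ) (E := E) (F := E)).norm_map T]
    exact hT
  have hun : ‖u‖ ≤ 1 := by
    calc ‖u‖ ≤ ‖adjoint T‖ * ‖T v‖ := le_opNorm _ _
    _ ≤ 1 := by rw [hTv, mul_one]; exact hadj
  have hsq : ‖v - u‖ ^ 2 ≤ 0 := by
    have h := @norm_sub_sq ℂ _ _ _ _ v u
    have hre : RCLike.re (⟪v, u⟫_ℂ) = 1 := by rw [hinner]; simp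
    nlinarith [norm_nonneg u]
  have : v - u = 0 := by
    have := pow_eq_zero_iff (n := 2) (by norm_num) |>.mp (le_antisymm hsq (by positivity))
    simpa [norm_eq_zero] using this
  exact (sub_eq_zero.mp this).symm

/-- An operator of norm one on a finite-dimensional space attains its norm. -/
theorem aux_exists_max (T : E →L[ℂ] E) (hT : ‖T‖ = 1) : ∃ x : E, ‖x‖ = 1 ∧ ‖T x‖ = 1 := by
  rcases subsingleton_or_nontrivial E with hE | hE
  · exfalso
    have : T = 0 := Subsingleton.elim _ _
    rw [this, norm_zero] at hT; exact one_ne_zero hT.symm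
  have hsph : (Metric.sphere (0 : E) 1).Nonempty := NormedSpace.sphere_nonempty.mpr zero_le_one
  obtain ⟨x, hx, hmax⟩ := (isCompact_sphere (0 : E) 1).exists_isMaxOn hsph
    (T.continuous.norm.continuousOn)
  rw [mem_sphere_zero_iff_norm] at hx
  have hTx_le : ‖T x‖ ≤ 1 := by
    calc ‖T x‖ ≤ ‖T‖ * ‖x‖ := T.le_opNorm x
    _ = 1 := by rw [hT, hx, mul_one]
  refine ⟨x, hx, le_antisymm hTx_le ?_⟩
  have : ‖T‖ ≤ ‖T x‖ := by
    refine T.opNorm_le_bound (by positivity) (fun y => ?_)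
    rcases eq_or_ne y 0 with rfl | hy
    · simp
    · have hy' : ‖y‖ ≠ 0 := norm_ne_zero_iff.mpr hy
      have hmem : (‖y‖⁻¹ • y) ∈ Metric.sphere (0 : E) 1 := by
        rw [mem_sphere_zero_iff_norm, norm_smul]
        simp [hy']
      have h2 := hmax hmem
      simp only [Set.mem_setOf_eq] at h2
      rw [ContinuousLinearMap.map_smul_of_tower, norm_smul, norm_inv, norm_norm] at h2
      calc ‖T y‖ = ‖y‖ * (‖y‖⁻¹ * ‖T y‖) := by field_simp
      _ ≤ ‖y‖ * ‖T x‖ := by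
          apply mul_le_mul_of_nonneg_left h2 (norm_nonneg y)
      _ = ‖T x‖ * ‖y‖ := mul_comm _ _
  linarith [hT ▸ this]

theorem aux_fromBlocks_pow {α l m : Type*} [Fintype l] [Fintype m] [DecidableEq l]
    [DecidableEq m] [CommRing α] (A : Matrix l l α) (B : Matrix m m α) (p : ℕ) :
    (Matrix.fromBlocks A 0 0 B) ^ p = Matrix.fromBlocks (A ^ p) 0 0 (B ^ p) := by
  induction p with
  | zero => simp [Matrix.fromBlocks_one]
  | succ p ih =>
    rw [pow_succ, pow_succ, pow_succ, ih, Matrix.fromBlocks_multiply]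
    simp

end Aux

set_option maxHeartbeats 1000000 in
theorem stmt13 (n k : ℕ) (hk : 1 ≤ k) (A : Matrix (Fin n) (Fin n) ℂ)
    (h1 : opNorm A = 1) (h2 : opNorm (A ^ k) = 1) (h3 : A ^ (k + 1) = 0) :
    ∃ B : Matrix (Fin (n - (k + 1))) (Fin (n - (k + 1))) ℂ, B ^ (k + 1) = 0 ∧
      UnitSim A (Matrix.fromBlocks (Jordan (k + 1)) 0 0 B) := by
  classical
  set E := EuclideanSpace ℂ (Fin n) with hE
  set T : E →L[ℂ] E := Matrix.toEuclideanCLM (𝕜 := ℂ) A with hTdef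
  have hmap : ∀ m : ℕ, Matrix.toEuclideanCLM (𝕜 := ℂ) (A ^ m) = T ^ m := fun m => map_pow _ _ _
  have hT1 : ‖T‖ = 1 := h1
  have hTk : ‖T ^ k‖ = 1 := by rw [← hmap]; exact h2
  have hTk1 : (T : E →L[ℂ] E) ^ (k + 1) = 0 := by rw [← hmap, h3, map_zero]
  -- pointwise norm bound for powers
  have hpt : ∀ (m : ℕ) (v : E), ‖(T ^ m) v‖ ≤ ‖v‖ := by
    intro m
    induction m with
    | zero => intro v; simp
    | succ m ih =>
      intro v
      rw [pow_succ, ContinuousLinearMap.mul_apply]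
      calc ‖(T ^ m) (T v)‖ ≤ ‖T v‖ := ih (T v)
      _ ≤ ‖T‖ * ‖v‖ := T.le_opNorm v
      _ = ‖v‖ := by rw [hT1, one_mul]
  obtain ⟨x, hx, hxk⟩ := aux_exists_max (T ^ k) hTk
  set e : ℕ → E := fun j => (T ^ j) x with hedef
  have he0 : e 0 = x := by simp [hedef]
  have heS : ∀ j, T (e j) = e (j + 1) := by
    intro j
    rw [hedef]
    simp only
    rw [pow_succ', ContinuousLinearMap.mul_apply]
  have hetop : ∀ j, k + 1 ≤ j → e j = 0 := by
    intro j hj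
    have : T ^ j = T ^ (j - (k + 1)) * T ^ (k + 1) := by
      rw [← pow_add]
      congr 1
      omega
    rw [hedef]
    simp only
    rw [this, ContinuousLinearMap.mul_apply, hTk1]
    simp
  have henorm : ∀ j, j ≤ k → ‖e j‖ = 1 := by
    intro j hj
    have hle : ‖e j‖ ≤ 1 := by
      have := hpt j x
      rw [hx] at this
      exact this
    have hge : 1 ≤ ‖e j‖ := by
      have hcomp : (T ^ (k - j)) (e j) = e k := by
        rw [hedef]
        simp only
        rw [← ContinuousLinearMap.mul_apply, ← pow_add]
        congr 2
        omega
      have := hpt (k - j) (e j)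
      rw [hcomp] at this
      rw [show ‖e k‖ = 1 from hxk] at this
      exact this
    linarith
  set S : E →L[ℂ] E := ContinuousLinearMap.adjoint T with hSdef
  have hS : ∀ j, j < k → S (e (j + 1)) = e j := by
    intro j hj
    rw [← heS j]
    exact aux_adjoint_apply T hT1.le (e j) (henorm j (by omega))
      (by rw [heS j]; exact henorm (j + 1) (by omega))
  have hSpow : ∀ j, j ≤ k → (S ^ j) (e j) = x := by
    intro j
    induction j with
    | zero => intro _; rw [he0]; simp
    | succ j ih =>
      intro hj
      rw [pow_succ, ContinuousLinearMap.mul_apply, hS j (by omega), ih (by omega)]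
  have hSadj : ∀ (m : ℕ) (u w : E), ⟪(S ^ m) u, w⟫_ℂ = ⟪u, (T ^ m) w⟫_ℂ := by
    intro m u w
    have : S ^ m = ContinuousLinearMap.adjoint (T ^ m) := by
      rw [hSdef, ← ContinuousLinearMap.star_eq_adjoint, ← ContinuousLinearMap.star_eq_adjoint,
        ← star_pow]
    rw [this, ContinuousLinearMap.adjoint_inner_left]
  have hSx : S x = 0 := by
    have hinner : ⟪S x, S x⟫_ℂ = 0 := by
      have h1' : ⟪S x, S x⟫_ℂ = ⟪x, T (S x)⟫_ℂ := by
        rw [hSdef, ContinuousLinearMap.adjoint_inner_left]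
      have h2' : ⟪x, T (S x)⟫_ℂ = ⟪e k, (T ^ k) (T (S x))⟫_ℂ := by
        rw [← hSpow k le_rfl, hSadj]
      have h3' : (T ^ k) (T (S x)) = 0 := by
        rw [← ContinuousLinearMap.mul_apply, ← pow_succ, hTk1]
        simp
      rw [h1', h2', h3', inner_zero_right]
    exact inner_self_eq_zero.mp hinner
  -- orthogonality
  have orthAux : ∀ m a c, a < c → c ≤ k → k + 1 - c ≤ m → ⟪e a, e c⟫_ℂ = 0 := by
    intro m
    induction m with
    | zero => intro a c hac hck hm; omega
    | succ m ih =>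
      intro a c hac hck hm
      have ha : a < k := by omega
      have step : ⟪e a, e c⟫_ℂ = ⟪e (a + 1), e (c + 1)⟫_ℂ := by
        rw [← hS a ha, hSdef, ContinuousLinearMap.adjoint_inner_left, heS c]
      rw [step]
      by_cases hc1 : c + 1 ≤ k
      · exact ih (a + 1) (c + 1) (by omega) hc1 (by omega)
      · rw [hetop (c + 1) (by omega), inner_zero_right]
  have orth : ∀ a c, a < c → ⟪e a, e c⟫_ℂ = 0 := by
    intro a c hac
    by_cases hck : c ≤ k
    · exact orthAux (k + 1) a c hac hck (by omega)
    · rw [hetop c (by omega), inner_zero_right]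
  have hfull : ∀ a c, a ≤ k → c ≤ k → ⟪e a, e c⟫_ℂ = if a = c then 1 else 0 := by
    intro a c ha hc
    rcases lt_trichotomy a c with h | h | h
    · rw [if_neg (by omega), orth a c h]
    · subst h
      rw [if_pos rfl, inner_self_eq_norm_sq_to_K, henorm a ha]
      norm_num
    · rw [if_neg (by omega), ← inner_conj_symm, orth c a h, map_zero]
  -- the orthonormal chain, reversed
  set f : Fin (k + 1) → E := fun j => e (k - (j : ℕ)) with hfdef
  have horthf : Orthonormal ℂ f := by
    rw [orthonormal_iff_ite]
    intro i j
    rw [hfdef]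
    simp only
    rw [hfull (k - (i : ℕ)) (k - (j : ℕ)) (by omega) (by omega)]
    have hi := i.isLt
    have hj := j.isLt
    by_cases h : i = j
    · subst h; simp
    · have : (i : ℕ) ≠ (j : ℕ) := fun hc => h (Fin.ext hc)
      rw [if_neg (by omega), if_neg h]
  set M : Submodule ℂ E := Submodule.span ℂ (Set.range f) with hMdef
  have hfM : ∀ i, f i ∈ M := fun i => Submodule.subset_span ⟨i, rfl⟩
  have heM : ∀ a, e a ∈ M := by
    intro a
    by_cases ha : a ≤ k
    · have : f ⟨k - a, by omega⟩ = e a := by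
        have h9 : k - (k - a) = a := by omega
        show e (k - (k - a)) = e a
        rw [h9]
      rw [← this]
      exact hfM _
    · rw [hetop a (by omega)]
      exact M.zero_mem
  have hSM : ∀ a, a ≤ k → S (e a) ∈ M := by
    intro a ha
    rcases Nat.eq_zero_or_pos a with rfl | hpos
    · rw [he0, hSx]; exact M.zero_mem
    · obtain ⟨j, rfl⟩ : ∃ j, a = j + 1 := ⟨a - 1, by omega⟩
      rw [hS j (by omega)]
      exact heM j
  have hrank : Module.finrank ℂ M = k + 1 := by
    rw [hMdef, finrank_span_eq_card horthf.linearIndependent]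
    simp
  have hranktop : Module.finrank ℂ E = n := finrank_euclideanSpace_fin
  have hn : k + 1 ≤ n := by
    have := M.finrank_le
    rw [hrank, hranktop] at this
    exact this
  have hperp : Module.finrank ℂ (Mᗮ) = n - (k + 1) := by
    have := Submodule.finrank_add_finrank_orthogonal (K := M)
    rw [hrank, hranktop] at this
    omega
  set g : OrthonormalBasis (Fin (n - (k + 1))) ℂ (Mᗮ) :=
    (stdOrthonormalBasis ℂ (Mᗮ : Submodule ℂ E)).reindex (finCongr hperp) with hgdef
  set fam : (Fin (k + 1) ⊕ Fin (n - (k + 1))) → E :=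
    Sum.elim f (fun j => ((g j : E))) with hfamdef
  have horthfam : Orthonormal ℂ fam := by
    constructor
    · rintro (i | i)
      · exact horthf.1 i
      · exact g.orthonormal.1 i
    · rintro (i | i) (j | j) hij
      · exact horthf.2 (fun hc => hij (by rw [hc]))
      · exact Submodule.inner_right_of_mem_orthogonal (hfM i) (g j).2
      · exact Submodule.inner_left_of_mem_orthogonal (hfM j) (g i).2
      · have hne : i ≠ j := fun hc => hij (by rw [hc])
        have := g.orthonormal.2 hne
        rw [hfamdef]
        simpa [Submodule.coe_inner] using this
  have hspan : ⊤ ≤ Submodule.span ℂ (Set.range fam) := by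
    rw [hfamdef, Set.Sum.elim_range, Submodule.span_union]
    have h1' : Submodule.span ℂ (Set.range f) = M := hMdef.symm
    have h2' : Submodule.span ℂ (Set.range (fun j => ((g j : E)))) = Mᗮ := by
      have hrg : Set.range (fun j => ((g j : E))) = Set.range ((Mᗮ).subtype ∘ g) := by
        ext v
        simp [Function.comp]
      rw [hrg, Set.range_comp, Submodule.span_image, ← g.coe_toBasis,
        g.toBasis.span_eq, Submodule.map_subtype_top]
    rw [h1', h2', Submodule.sup_orthogonal_of_hasOrthogonalProjection]
  set b : OrthonormalBasis (Fin (k + 1) ⊕ Fin (n - (k + 1))) ℂ E :=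
    OrthonormalBasis.mk horthfam hspan with hbdef
  have hb : ∀ i, b i = fam i := fun i => by
    rw [hbdef, OrthonormalBasis.coe_mk]
  set B : Matrix (Fin (n - (k + 1))) (Fin (n - (k + 1))) ℂ :=
    Matrix.of (fun i j => ⟪((g i : E)), T ((g j : E))⟫_ℂ) with hBdef
  set C : Matrix (Fin (k + 1) ⊕ Fin (n - (k + 1))) (Fin (k + 1) ⊕ Fin (n - (k + 1))) ℂ :=
    Matrix.fromBlocks (Jordan (k + 1)) 0 0 B with hCdef
  have hTf : ∀ j : Fin (k + 1), T (f j) = e (k - (j : ℕ) + 1) := by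
    intro j
    rw [hfdef]
    exact heS _
  have hC : ∀ i j, C i j = ⟪b i, T (b j)⟫_ℂ := by
    rintro (i | i) (j | j) <;> simp only [hb, hCdef, hfamdef, Sum.elim_inl, Sum.elim_inr,
      Matrix.fromBlocks_apply₁₁, Matrix.fromBlocks_apply₁₂, Matrix.fromBlocks_apply₂₁,
      Matrix.fromBlocks_apply₂₂, Matrix.zero_apply]
    · -- Jordan block
      rw [hTf j]
      show (if (i : ℕ) + 1 = (j : ℕ) then (1 : ℂ) else 0) = _
      have hi := i.isLt
      have hj := j.isLt
      by_cases hj0 : (j : ℕ) = 0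
      · rw [hj0, Nat.sub_zero, hetop (k + 1) le_rfl, inner_zero_right, if_neg (by omega)]
      · have hj1 : k - (j : ℕ) + 1 ≤ k := by omega
        rw [hfdef]
        rw [hfull (k - (i : ℕ)) (k - (j : ℕ) + 1) (by omega) hj1]
        by_cases hcase : (i : ℕ) + 1 = (j : ℕ)
        · rw [if_pos hcase, if_pos (by omega)]
        · rw [if_neg hcase, if_neg (by omega)]
    · -- upper right
      have hadj : ⟪f i, T ((g j : E))⟫_ℂ = ⟪S (f i), ((g j : E))⟫_ℂ := by
        rw [hSdef, ContinuousLinearMap.adjoint_inner_left]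
      rw [hadj]
      have hmem : S (f i) ∈ M := hSM (k - (i : ℕ)) (by omega)
      exact (Submodule.inner_right_of_mem_orthogonal hmem (g j).2).symm
    · -- lower left
      rw [hTf j]
      exact (Submodule.inner_left_of_mem_orthogonal (heM _) (g i).2).symm
    · rfl
  have hmain : ∀ v : E, Matrix.toEuclideanLin C (b.repr v) = b.repr (T v) := by
    intro v
    refine PiLp.ext (fun i => ?_)
    have hTv : T v = ∑ j, b.repr v j • T (b j) := by
      conv_lhs => rw [← b.sum_repr v]
      rw [map_sum]
      simp_rw [ContinuousLinearMap.map_smul]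
    have hrhs : b.repr (T v) i = ∑ j, C i j * b.repr v j := by
      rw [OrthonormalBasis.repr_apply_apply, hTv, inner_sum]
      refine Finset.sum_congr rfl (fun j _ => ?_)
      rw [inner_smul_right, hC i j, mul_comm]
    have hlhs : (Matrix.toEuclideanLin C (b.repr v)) i = ∑ j, C i j * b.repr v j := rfl
    rw [hlhs, hrhs]
  have hAv : ∀ v : E, Matrix.toEuclideanLin A v = T v := fun v => by
    rw [hTdef, ← Matrix.coe_toEuclideanCLM_eq_toEuclideanLin]
    rfl
  have hmulE : ∀ (P Q : Matrix (Fin (k + 1) ⊕ Fin (n - (k + 1)))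
      (Fin (k + 1) ⊕ Fin (n - (k + 1))) ℂ) (w), Matrix.toEuclideanLin (P * Q) w =
      Matrix.toEuclideanLin P (Matrix.toEuclideanLin Q w) := by
    intro P Q w
    simp [Matrix.toEuclideanLin_apply, Matrix.mulVec_mulVec]
  have hCpow : ∀ (m : ℕ) (v : E),
      Matrix.toEuclideanLin (C ^ m) (b.repr v) = b.repr ((T ^ m) v) := by
    intro m
    induction m with
    | zero =>
      intro v
      simp [Matrix.toEuclideanLin_apply, Matrix.one_mulVec]
    | succ m ih =>
      intro v
      rw [pow_succ', pow_succ', hmulE, ih, hmain, ContinuousLinearMap.mul_apply]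
  have hC0 : C ^ (k + 1) = 0 := by
    have hzero : ∀ w, Matrix.toEuclideanLin (C ^ (k + 1)) w = 0 := by
      intro w
      have h := hCpow (k + 1) (b.repr.symm w)
      rw [LinearIsometryEquiv.apply_symm_apply] at h
      rw [h, hTk1]
      simp
    have h0 : Matrix.toEuclideanLin (C ^ (k + 1)) = Matrix.toEuclideanLin (0 :
        Matrix (Fin (k + 1) ⊕ Fin (n - (k + 1))) (Fin (k + 1) ⊕ Fin (n - (k + 1))) ℂ) := by
      refine LinearMap.ext (fun w => ?_)
      rw [hzero w, map_zero]
      rfl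
    exact Matrix.toEuclideanLin.injective h0
  have hB0 : B ^ (k + 1) = 0 := by
    have hfb := aux_fromBlocks_pow (Jordan (k + 1)) B (k + 1)
    rw [hCdef, hfb] at hC0
    ext i j
    have h := congrFun (congrFun hC0 (Sum.inr i)) (Sum.inr j)
    simpa using h
  exact ⟨B, hB0, ⟨b.repr, fun v => by rw [hAv v]; exact hmain v⟩⟩
end

section
/- For the matrix A = J_2 ⊕ [a] with 0 < |a| ≤ 1/2 (a complex scalar block adjoined to the 2-by-2 nilpotent Jordan block), one has ‖A‖ = 1, w(A ⊗ A) = w(A) = 1/2, yet ‖A^2‖ < 1 and A is not nilpotent. -/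
open scoped Kronecker InnerProductSpace

lemma numRadius_eq {n : Type*} [Fintype n] [DecidableEq n] (A : Matrix n n ℂ) (c : ℝ)
    (hub : ∀ x : EuclideanSpace ℂ n, ‖x‖ = 1 →
      ‖⟪x, Matrix.toEuclideanLin A x⟫_ℂ‖ ≤ c)
    (hex : ∃ x : EuclideanSpace ℂ n, ‖x‖ = 1 ∧
      ‖⟪x, Matrix.toEuclideanLin A x⟫_ℂ‖ = c) :
    numRadius A = c := by
  obtain ⟨x, hx, hxc⟩ := hex
  apply le_antisymm
  · apply Real.sSup_le
    · rintro r ⟨y, hy, rfl⟩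
      exact hub y hy
    · exact (norm_nonneg _).trans (hub x hx)
  · apply le_csSup
    · exact ⟨c, by rintro r ⟨y, hy, rfl⟩; exact hub y hy⟩
    · exact ⟨x, hx, hxc.symm⟩

/-- The witness value `√2 / 2`. -/
noncomputable def stmt15w : ℝ := Real.sqrt 2 / 2

lemma stmt15w_sq : stmt15w ^ 2 = 1 / 2 := by
  rw [stmt15w, div_pow, Real.sq_sqrt] <;> norm_num

lemma stmt15w_pos : 0 < stmt15w := by rw [stmt15w]; positivity

section opNormPart

variable (a : ℂ)

lemma stmt15_opNorm (ha2 : ‖a‖ ≤ 1 / 2) :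
    ‖Matrix.toEuclideanCLM (𝕜 := ℂ) !![0, 1, 0; 0, 0, 0; 0, 0, a]‖ = 1 := by
  have key : ∀ (x : EuclideanSpace ℂ (Fin 3)) (i : Fin 3),
      (Matrix.toEuclideanCLM (𝕜 := ℂ) !![0, 1, 0; 0, 0, 0; 0, 0, a]) x i
        = (!![0, 1, 0; 0, 0, 0; 0, 0, a]).mulVec x i := fun _ _ => rfl
  apply le_antisymm
  · apply ContinuousLinearMap.opNorm_le_bound _ zero_le_one
    intro x
    rw [one_mul]
    have h1 : ∀ y : EuclideanSpace ℂ (Fin 3), ‖y‖ = Real.sqrt (‖y 0‖^2 + ‖y 1‖^2 + ‖y 2‖^2) := by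
      intro y
      rw [EuclideanSpace.norm_eq, Fin.sum_univ_three]
    rw [h1, h1]
    apply Real.sqrt_le_sqrt
    rw [key, key, key]
    have e0 : (!![0, 1, 0; 0, 0, 0; 0, 0, a]).mulVec x 0 = x 1 := by
      simp [Matrix.mulVec, dotProduct, Fin.sum_univ_three, Matrix.vecHead, Matrix.vecTail]
    have e1 : (!![0, 1, 0; 0, 0, 0; 0, 0, a]).mulVec x 1 = 0 := by
      simp [Matrix.mulVec, dotProduct, Fin.sum_univ_three, Matrix.vecHead, Matrix.vecTail]
    have e2 : (!![0, 1, 0; 0, 0, 0; 0, 0, a]).mulVec x 2 = a * x 2 := by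
      simp [Matrix.mulVec, dotProduct, Fin.sum_univ_three, Matrix.vecHead, Matrix.vecTail]
    rw [e0, e1, e2]
    have hle : ‖a * x 2‖ ≤ ‖x 2‖ := by
      rw [norm_mul]
      calc ‖a‖ * ‖x 2‖ ≤ (1/2) * ‖x 2‖ :=
            mul_le_mul_of_nonneg_right ha2 (norm_nonneg _)
        _ ≤ ‖x 2‖ := by nlinarith [norm_nonneg (x 2)]
    have hsq : ‖a * x 2‖^2 ≤ ‖x 2‖^2 := pow_le_pow_left₀ (norm_nonneg _) hle 2
    simp only [norm_zero]; nlinarith [norm_nonneg (x 0), sq_nonneg (‖x 0‖)]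
  · have h := ContinuousLinearMap.le_opNorm
      (Matrix.toEuclideanCLM (𝕜 := ℂ) !![0, 1, 0; 0, 0, 0; 0, 0, a]) (EuclideanSpace.single 1 (1:ℂ))
    rw [EuclideanSpace.norm_single, mul_comm] at h
    simp only [norm_one, one_mul] at h
    refine le_trans ?_ h
    have : (Matrix.toEuclideanCLM (𝕜 := ℂ) !![0, 1, 0; 0, 0, 0; 0, 0, a])
        (EuclideanSpace.single 1 (1:ℂ)) = EuclideanSpace.single 0 (1:ℂ) := by
      apply PiLp.ext
      intro i
      rw [key]
      fin_cases i <;>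
        simp [Matrix.mulVec, dotProduct, Fin.sum_univ_three, Matrix.vecHead,
          Matrix.vecTail, EuclideanSpace.single_apply]
    rw [this, EuclideanSpace.norm_single, norm_one]

lemma stmt15_inner (x : EuclideanSpace ℂ (Fin 3)) :
    ⟪x, Matrix.toEuclideanLin (!![0, 1, 0; 0, 0, 0; 0, 0, a]) x⟫_ℂ
      = (starRingEnd ℂ) (x 0) * x 1 + (starRingEnd ℂ) (x 2) * (a * x 2) := by
  have : ⟪x, Matrix.toEuclideanLin (!![0, 1, 0; 0, 0, 0; 0, 0, a] : Matrix (Fin 3) (Fin 3) ℂ) x⟫_ℂ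
      = ∑ i, (starRingEnd ℂ) (x i) * (!![0, 1, 0; 0, 0, 0; 0, 0, a]).mulVec x i := by
    simp [PiLp.inner_apply, Matrix.toEuclideanLin, mul_comm]
  rw [this, Fin.sum_univ_three]
  simp [Matrix.mulVec, dotProduct, Fin.sum_univ_three, Matrix.vecHead, Matrix.vecTail]

lemma stmt15_normsq (x : EuclideanSpace ℂ (Fin 3)) (hx : ‖x‖ = 1) :
    ‖x 0‖^2 + ‖x 1‖^2 + ‖x 2‖^2 = 1 := by
  have h0 := EuclideanSpace.norm_eq x
  rw [hx, Fin.sum_univ_three] at h0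
  have h := h0.symm
  have h2 : ‖x 0‖ ^ 2 + ‖x 1‖ ^ 2 + ‖x 2‖ ^ 2
      = (Real.sqrt (‖x 0‖ ^ 2 + ‖x 1‖ ^ 2 + ‖x 2‖ ^ 2))^2 := by
    rw [Real.sq_sqrt]; positivity
  rw [h2, h]; norm_num

lemma stmt15_numRadius (ha2 : ‖a‖ ≤ 1 / 2) :
    numRadius !![0, 1, 0; 0, 0, 0; 0, 0, a] = 1 / 2 := by
  apply numRadius_eq
  · intro x hx
    have hnorm := stmt15_normsq x hx
    rw [stmt15_inner]
    calc ‖(starRingEnd ℂ) (x 0) * x 1 + (starRingEnd ℂ) (x 2) * (a * x 2)‖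
        ≤ ‖(starRingEnd ℂ) (x 0) * x 1‖
            + ‖(starRingEnd ℂ) (x 2) * (a * x 2)‖ := norm_add_le _ _
      _ = ‖x 0‖ * ‖x 1‖ + ‖x 2‖ * (‖a‖ * ‖x 2‖) := by
          simp [norm_mul]
      _ ≤ 1/2 := by
          nlinarith [sq_nonneg (‖x 0‖ - ‖x 1‖), norm_nonneg (x 2), sq_nonneg (‖x 2‖),
            norm_nonneg a, norm_nonneg (x 0), norm_nonneg (x 1)]
  · refine ⟨(WithLp.equiv 2 _).symm ![(stmt15w:ℂ), (stmt15w:ℂ), 0], ?_, ?_⟩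
    · rw [EuclideanSpace.norm_eq, Fin.sum_univ_three]
      simp only [WithLp.equiv_symm_apply, WithLp.ofLp_toLp, Matrix.cons_val_zero, Matrix.cons_val_one,
        Matrix.head_cons, Matrix.cons_val_two, Matrix.tail_cons, norm_zero]
      rw [Complex.norm_real]
      norm_num
      nlinarith [stmt15w_sq, stmt15w_pos]
    · rw [stmt15_inner]
      simp only [WithLp.equiv_symm_apply, WithLp.ofLp_toLp, Matrix.cons_val_zero, Matrix.cons_val_one,
        Matrix.head_cons, Matrix.cons_val_two, Matrix.tail_cons]
      simp [← Complex.ofReal_mul]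
      nlinarith [stmt15w_sq, stmt15w_pos]

set_option maxHeartbeats 1000000 in
lemma stmt15_kron_inner (x : EuclideanSpace ℂ (Fin 3 × Fin 3)) :
    ⟪x, Matrix.toEuclideanLin
        ((!![0, 1, 0; 0, 0, 0; 0, 0, a]) ⊗ₖ (!![0, 1, 0; 0, 0, 0; 0, 0, a])) x⟫_ℂ
      = (starRingEnd ℂ) (x (0,0)) * x (1,1) + a * ((starRingEnd ℂ) (x (0,2)) * x (1,2))
        + a * ((starRingEnd ℂ) (x (2,0)) * x (2,1))
        + a * a * ((starRingEnd ℂ) (x (2,2)) * x (2,2)) := by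
  have key : ⟪x, Matrix.toEuclideanLin
        ((!![0, 1, 0; 0, 0, 0; 0, 0, a]) ⊗ₖ (!![0, 1, 0; 0, 0, 0; 0, 0, a])) x⟫_ℂ
      = ∑ p, (starRingEnd ℂ) (x p) *
        (((!![0, 1, 0; 0, 0, 0; 0, 0, a]) ⊗ₖ (!![0, 1, 0; 0, 0, 0; 0, 0, a])).mulVec x) p := by
    simp [PiLp.inner_apply, Matrix.toEuclideanLin, mul_comm]
  have ent : ∀ p, (((!![0, 1, 0; 0, 0, 0; 0, 0, a]) ⊗ₖ (!![0, 1, 0; 0, 0, 0; 0, 0, a])).mulVec x) p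
      = ∑ q, (!![0, 1, 0; 0, 0, 0; 0, 0, a]) p.1 q.1
          * (!![0, 1, 0; 0, 0, 0; 0, 0, a]) p.2 q.2 * x q := by
    intro p
    simp [Matrix.mulVec, dotProduct, Matrix.kroneckerMap_apply]
  rw [key]
  simp only [ent]
  simp only [Fintype.sum_prod_type, Fin.sum_univ_three]
  norm_num [Matrix.cons_val_zero, Matrix.cons_val_one, Matrix.head_cons, Matrix.cons_val_two,
    Matrix.tail_cons, Matrix.vecHead, Matrix.vecTail]
  ring

lemma stmt15_kron_normsq (x : EuclideanSpace ℂ (Fin 3 × Fin 3)) (hx : ‖x‖ = 1) :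
    ‖x (0,0)‖^2 + ‖x (0,1)‖^2 + ‖x (0,2)‖^2 + ‖x (1,0)‖^2 + ‖x (1,1)‖^2 + ‖x (1,2)‖^2
      + ‖x (2,0)‖^2 + ‖x (2,1)‖^2 + ‖x (2,2)‖^2 = 1 := by
  have h0 := EuclideanSpace.norm_eq x
  rw [hx, Fintype.sum_prod_type] at h0
  simp only [Fin.sum_univ_three] at h0
  have h := h0.symm
  set S := ‖x (0,0)‖^2 + ‖x (0,1)‖^2 + ‖x (0,2)‖^2 + ‖x (1,0)‖^2 + ‖x (1,1)‖^2 + ‖x (1,2)‖^2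
      + ‖x (2,0)‖^2 + ‖x (2,1)‖^2 + ‖x (2,2)‖^2 with hS
  have hSnn : 0 ≤ S := by rw [hS]; positivity
  have h2 : Real.sqrt S = 1 := by
    rw [← h]; congr 1; rw [hS]; ring
  have := Real.sq_sqrt hSnn
  rw [h2] at this
  rw [← this]; norm_num

set_option maxHeartbeats 1000000 in
lemma stmt15_kron_numRadius (ha2 : ‖a‖ ≤ 1 / 2) :
    numRadius ((!![0, 1, 0; 0, 0, 0; 0, 0, a]) ⊗ₖ (!![0, 1, 0; 0, 0, 0; 0, 0, a])) = 1 / 2 := by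
  apply numRadius_eq
  · intro x hx
    have hnorm := stmt15_kron_normsq x hx
    rw [stmt15_kron_inner]
    have habs : ∀ z1 z2 : ℂ, ‖(starRingEnd ℂ) z1 * z2‖ = ‖z1‖ * ‖z2‖ := by
      intro z1 z2; simp [norm_mul]
    calc ‖(starRingEnd ℂ) (x (0,0)) * x (1,1)
            + a * ((starRingEnd ℂ) (x (0,2)) * x (1,2))
            + a * ((starRingEnd ℂ) (x (2,0)) * x (2,1))
            + a * a * ((starRingEnd ℂ) (x (2,2)) * x (2,2))‖
        ≤ ‖(starRingEnd ℂ) (x (0,0)) * x (1,1)‖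
            + ‖a * ((starRingEnd ℂ) (x (0,2)) * x (1,2))‖
            + ‖a * ((starRingEnd ℂ) (x (2,0)) * x (2,1))‖
            + ‖a * a * ((starRingEnd ℂ) (x (2,2)) * x (2,2))‖ := by
          calc _ ≤ ‖(starRingEnd ℂ) (x (0,0)) * x (1,1)
                  + a * ((starRingEnd ℂ) (x (0,2)) * x (1,2))
                  + a * ((starRingEnd ℂ) (x (2,0)) * x (2,1))‖
                + ‖a * a * ((starRingEnd ℂ) (x (2,2)) * x (2,2))‖ :=
              norm_add_le _ _
            _ ≤ ‖(starRingEnd ℂ) (x (0,0)) * x (1,1)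
                  + a * ((starRingEnd ℂ) (x (0,2)) * x (1,2))‖
                + ‖a * ((starRingEnd ℂ) (x (2,0)) * x (2,1))‖
                + ‖a * a * ((starRingEnd ℂ) (x (2,2)) * x (2,2))‖ := by
              have := norm_add_le ((starRingEnd ℂ) (x (0,0)) * x (1,1)
                  + a * ((starRingEnd ℂ) (x (0,2)) * x (1,2)))
                  (a * ((starRingEnd ℂ) (x (2,0)) * x (2,1)))
              linarith
            _ ≤ _ := by
              have := norm_add_le ((starRingEnd ℂ) (x (0,0)) * x (1,1))
                  (a * ((starRingEnd ℂ) (x (0,2)) * x (1,2)))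
              linarith
      _ = ‖x (0,0)‖ * ‖x (1,1)‖ + ‖a‖ * (‖x (0,2)‖ * ‖x (1,2)‖)
            + ‖a‖ * (‖x (2,0)‖ * ‖x (2,1)‖)
            + ‖a‖ * ‖a‖ * (‖x (2,2)‖ * ‖x (2,2)‖) := by
          simp only [norm_mul, RCLike.norm_conj]
      _ ≤ 1/2 := by
          have ha0 : 0 ≤ ‖a‖ := norm_nonneg a
          have h1 : ‖x (0,0)‖ * ‖x (1,1)‖ ≤ (‖x (0,0)‖^2 + ‖x (1,1)‖^2)/2 := by
            nlinarith [sq_nonneg (‖x (0,0)‖ - ‖x (1,1)‖)]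
          have h2 : ‖a‖ * (‖x (0,2)‖ * ‖x (1,2)‖)
              ≤ (1/2) * ((‖x (0,2)‖^2 + ‖x (1,2)‖^2)/2) := by
            have hp : ‖x (0,2)‖ * ‖x (1,2)‖ ≤ (‖x (0,2)‖^2 + ‖x (1,2)‖^2)/2 := by
              nlinarith [sq_nonneg (‖x (0,2)‖ - ‖x (1,2)‖)]
            have hq : (0:ℝ) ≤ ‖x (0,2)‖ * ‖x (1,2)‖ :=
              mul_nonneg (norm_nonneg _) (norm_nonneg _)
            exact mul_le_mul ha2 hp hq (by norm_num)
          have h3 : ‖a‖ * (‖x (2,0)‖ * ‖x (2,1)‖)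
              ≤ (1/2) * ((‖x (2,0)‖^2 + ‖x (2,1)‖^2)/2) := by
            have hp : ‖x (2,0)‖ * ‖x (2,1)‖ ≤ (‖x (2,0)‖^2 + ‖x (2,1)‖^2)/2 := by
              nlinarith [sq_nonneg (‖x (2,0)‖ - ‖x (2,1)‖)]
            have hq : (0:ℝ) ≤ ‖x (2,0)‖ * ‖x (2,1)‖ :=
              mul_nonneg (norm_nonneg _) (norm_nonneg _)
            exact mul_le_mul ha2 hp hq (by norm_num)
          have h4 : ‖a‖ * ‖a‖ * (‖x (2,2)‖ * ‖x (2,2)‖)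
              ≤ (1/4) * (‖x (2,2)‖ * ‖x (2,2)‖) := by
            have haa : ‖a‖ * ‖a‖ ≤ 1/4 := by nlinarith
            nlinarith [mul_nonneg (norm_nonneg (x (2,2))) (norm_nonneg (x (2,2)))]
          nlinarith [sq_nonneg (‖x (0,1)‖), sq_nonneg (‖x (1,0)‖), sq_nonneg (‖x (2,2)‖),
            norm_nonneg (x (2,2))]
  · refine ⟨(WithLp.equiv 2 _).symm
      (fun p => (!![(stmt15w:ℂ), 0, 0; 0, (stmt15w:ℂ), 0; 0, 0, 0]) p.1 p.2), ?_, ?_⟩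
    · rw [EuclideanSpace.norm_eq, Fintype.sum_prod_type]
      simp only [Fin.sum_univ_three, WithLp.equiv_symm_apply, WithLp.ofLp_toLp]
      norm_num [Matrix.cons_val_zero, Matrix.cons_val_one, Matrix.head_cons, Matrix.cons_val_two,
        Matrix.tail_cons, Matrix.vecHead, Matrix.vecTail, Complex.norm_real]
      nlinarith [stmt15w_sq, stmt15w_pos]
    · rw [stmt15_kron_inner]
      simp only [WithLp.equiv_symm_apply, WithLp.ofLp_toLp]
      norm_num [Matrix.cons_val_zero, Matrix.cons_val_one, Matrix.head_cons, Matrix.cons_val_two,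
        Matrix.tail_cons, Matrix.vecHead, Matrix.vecTail, ← Complex.ofReal_mul]
      nlinarith [stmt15w_sq, stmt15w_pos]

lemma stmt15_sq (ha2 : ‖a‖ ≤ 1 / 2) :
    ‖Matrix.toEuclideanCLM (n := Fin 3) (𝕜 := ℂ) (!![0, 1, 0; 0, 0, 0; 0, 0, a] ^ 2)‖ < 1 := by
  have hsq : (!![0, 1, 0; 0, 0, 0; 0, 0, a] : Matrix (Fin 3) (Fin 3) ℂ) ^ 2
      = !![0, 0, 0; 0, 0, 0; 0, 0, a * a] := by
    rw [sq]
    ext i j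
    fin_cases i <;> fin_cases j <;>
      simp [Matrix.mul_apply, Fin.sum_univ_three, Matrix.vecHead, Matrix.vecTail]
  rw [hsq]
  have key : ∀ (x : EuclideanSpace ℂ (Fin 3)) (i : Fin 3),
      (Matrix.toEuclideanCLM (𝕜 := ℂ) !![0, 0, 0; 0, 0, 0; 0, 0, a * a]) x i
        = (!![0, 0, 0; 0, 0, 0; 0, 0, a * a]).mulVec x i := fun _ _ => rfl
  have hb : ‖Matrix.toEuclideanCLM (𝕜 := ℂ) !![0, 0, 0; 0, 0, 0; 0, 0, a * a]‖ ≤ 1/4 := by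
    apply ContinuousLinearMap.opNorm_le_bound _ (by norm_num)
    intro x
    have h1 : ∀ y : EuclideanSpace ℂ (Fin 3), ‖y‖ = Real.sqrt (‖y 0‖^2 + ‖y 1‖^2 + ‖y 2‖^2) := by
      intro y
      rw [EuclideanSpace.norm_eq, Fin.sum_univ_three]
    rw [h1]
    have e0 : (Matrix.toEuclideanCLM (𝕜 := ℂ) !![0, 0, 0; 0, 0, 0; 0, 0, a * a]) x 0 = 0 := by
      rw [key]; simp [Matrix.mulVec, dotProduct, Fin.sum_univ_three]
    have e1 : (Matrix.toEuclideanCLM (𝕜 := ℂ) !![0, 0, 0; 0, 0, 0; 0, 0, a * a]) x 1 = 0 := by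
      rw [key]; simp [Matrix.mulVec, dotProduct, Fin.sum_univ_three]
    have e2 : (Matrix.toEuclideanCLM (𝕜 := ℂ) !![0, 0, 0; 0, 0, 0; 0, 0, a * a]) x 2
        = a * a * x 2 := by
      rw [key]
      simp [Matrix.mulVec, dotProduct, Fin.sum_univ_three, Matrix.vecHead, Matrix.vecTail]
    rw [e0, e1, e2]
    simp only [norm_zero]
    have hs : Real.sqrt (0^2 + 0^2 + ‖a * a * x 2‖^2) = ‖a * a * x 2‖ := by
      rw [show (0:ℝ)^2 + 0^2 + ‖a * a * x 2‖^2 = ‖a * a * x 2‖^2 by ring,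
        Real.sqrt_sq (norm_nonneg _)]
    rw [hs]
    have : ‖a * a * x 2‖ ≤ (1/4) * ‖x 2‖ := by
      rw [norm_mul, norm_mul]
      have h0 : 0 ≤ ‖a‖ := norm_nonneg a
      nlinarith [norm_nonneg (x 2), mul_le_mul ha2 ha2 h0 (by norm_num : (0:ℝ) ≤ 1/2)]
    refine le_trans this ?_
    have : ‖x 2‖ ≤ ‖x‖ := by
      rw [h1 x]
      have := Real.sqrt_le_sqrt
        (show ‖x 2‖^2 ≤ ‖x 0‖^2 + ‖x 1‖^2 + ‖x 2‖^2 by nlinarith [sq_nonneg ‖x 0‖, sq_nonneg ‖x 1‖])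
      rwa [Real.sqrt_sq (norm_nonneg _)] at this
    nlinarith [norm_nonneg x]
  linarith

lemma stmt15_not_nilpotent (ha : a ≠ 0) :
    ¬ IsNilpotent (!![0, 1, 0; 0, 0, 0; 0, 0, a] : Matrix (Fin 3) (Fin 3) ℂ) := by
  rintro ⟨n, hn⟩
  have key : ∀ m : ℕ, ((!![0, 1, 0; 0, 0, 0; 0, 0, a] : Matrix (Fin 3) (Fin 3) ℂ) ^ m) 2 2
      = a ^ m := by
    intro m
    induction m with
    | zero => simp
    | succ k ih =>
      rw [pow_succ, Matrix.mul_apply, Fin.sum_univ_three, ih]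
      simp [Matrix.vecHead, Matrix.vecTail]
      ring
  have := key n
  rw [hn] at this
  simp at this
  exact pow_ne_zero n ha this.symm

end opNormPart

theorem stmt15 (a : ℂ) (ha : a ≠ 0) (ha2 : ‖a‖ ≤ 1 / 2)
    (A : Matrix (Fin 3) (Fin 3) ℂ) (hA : A = !![0, 1, 0; 0, 0, 0; 0, 0, a]) :
    opNorm A = 1 ∧ numRadius (A ⊗ₖ A) = 1 / 2 ∧ numRadius A = 1 / 2 ∧
      opNorm (A ^ 2) < 1 ∧ ¬ IsNilpotent A := by
  subst hA
  exact ⟨stmt15_opNorm a ha2, stmt15_kron_numRadius a ha2, stmt15_numRadius a ha2,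
    stmt15_sq a ha2, stmt15_not_nilpotent a ha⟩
end

section
/- Let A be an n-by-n nonnegative matrix. Then sup{k ≥ 1 : A^k ≠ 0} = ∞ if and only if there exists k ≥ 1 such that some diagonal entry of A^k is nonzero. -/
private lemma pow_nonneg' {n : ℕ} (A : Matrix (Fin n) (Fin n) ℝ)
    (hA : ∀ i j, 0 ≤ A i j) : ∀ k i j, 0 ≤ (A ^ k) i j := by
  intro k
  induction k with
  | zero =>
    intro i j
    rw [pow_zero]
    by_cases h : i = j <;> simp [Matrix.one_apply, h]
  | succ k ih =>
    intro i j
    rw [pow_succ, Matrix.mul_apply]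
    exact Finset.sum_nonneg fun m _ => mul_nonneg (ih i m) (hA m j)

private lemma mul_pos_entry {n : ℕ} (B C : Matrix (Fin n) (Fin n) ℝ)
    (hB : ∀ i j, 0 ≤ B i j) (hC : ∀ i j, 0 ≤ C i j) {i m j : Fin n}
    (h1 : 0 < B i m) (h2 : 0 < C m j) : 0 < (B * C) i j := by
  rw [Matrix.mul_apply]
  exact Finset.sum_pos' (fun x _ => mul_nonneg (hB i x) (hC x j))
    ⟨m, Finset.mem_univ m, mul_pos h1 h2⟩

private lemma path_of_pos {n : ℕ} (A : Matrix (Fin n) (Fin n) ℝ)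
    (hA : ∀ i j, 0 ≤ A i j) :
    ∀ k (i j : Fin n), 0 < (A ^ k) i j → ∃ f : ℕ → Fin n, f 0 = i ∧ f k = j ∧
      ∀ t < k, 0 < A (f t) (f (t + 1)) := by
  intro k
  induction k with
  | zero =>
    intro i j h
    rw [pow_zero] at h
    have hij : i = j := by
      by_contra hne
      simp [Matrix.one_apply, hne] at h
    exact ⟨fun _ => i, rfl, hij, fun t ht => absurd ht (Nat.not_lt_zero t)⟩
  | succ k ih =>
    intro i j h
    rw [pow_succ, Matrix.mul_apply] at h
    have : ∑ m : Fin n, (0 : ℝ) < ∑ m : Fin n, (A ^ k) i m * A m j := by simpa using h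
    obtain ⟨m, -, hm⟩ := Finset.exists_lt_of_sum_lt this
    rcases mul_pos_iff.mp hm with ⟨h1, h2⟩ | ⟨h1, -⟩
    · obtain ⟨f, hf0, hfk, hstep⟩ := ih i m h1
      refine ⟨fun t => if t ≤ k then f t else j, by simp [hf0], by simp, ?_⟩
      intro t ht
      rcases Nat.lt_or_ge t k with htk | htk
      · have h1' : t ≤ k := le_of_lt htk
        have h2' : t + 1 ≤ k := htk
        simpa [h1', h2'] using hstep t htk
      · have ht' : t = k := by omega
        subst ht'
        simpa [hfk] using h2
    · exact absurd (pow_nonneg' A hA k i m) (not_le.mpr h1)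

private lemma chain_pos {n : ℕ} (A : Matrix (Fin n) (Fin n) ℝ)
    (hA : ∀ i j, 0 ≤ A i j) (f : ℕ → Fin n) :
    ∀ s a, (∀ t, a ≤ t → t < a + s → 0 < A (f t) (f (t + 1))) →
      0 < (A ^ s) (f a) (f (a + s)) := by
  intro s
  induction s with
  | zero => intro a _; simp [Matrix.one_apply]
  | succ s ih =>
    intro a h
    have h1 := ih a (fun t ht1 ht2 => h t ht1 (by omega))
    have h2 : 0 < A (f (a + s)) (f (a + s + 1)) := h (a + s) (by omega) (by omega)
    have := mul_pos_entry (A ^ s) A (pow_nonneg' A hA s) hA h1 h2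
    rw [pow_succ]
    simpa [show a + (s + 1) = a + s + 1 by omega] using this

theorem stmt16 (n : ℕ) (A : Matrix (Fin n) (Fin n) ℝ) (hA : ∀ i j, 0 ≤ A i j) :
    sSup {c : ℕ∞ | ∃ k : ℕ, 1 ≤ k ∧ A ^ k ≠ 0 ∧ c = k} = ⊤ ↔
      ∃ (k : ℕ) (i : Fin n), 1 ≤ k ∧ (A ^ k) i i ≠ 0 := by
  constructor
  · intro h
    rw [sSup_eq_top] at h
    obtain ⟨c, hc, hlt⟩ := h (n : ℕ∞) (by exact_mod_cast WithTop.coe_lt_top (n : ℕ))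
    obtain ⟨k, hk1, hkne, rfl⟩ := hc
    have hnk : n < k := by exact_mod_cast hlt
    have hex : ∃ i j, (A ^ k) i j ≠ 0 := by
      by_contra h'
      push_neg at h'
      exact hkne (Matrix.ext fun i j => by simpa using h' i j)
    obtain ⟨i, j, hne⟩ := hex
    have hpos : 0 < (A ^ k) i j := (pow_nonneg' A hA k i j).lt_of_ne (Ne.symm hne)
    obtain ⟨f, hf0, hfk, hstep⟩ := path_of_pos A hA k i j hpos
    obtain ⟨a, b, hab, hfab⟩ := Fintype.exists_ne_map_eq_of_card_lt
      (fun t : Fin (k + 1) => f t) (by simp; omega)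
    wlog hlt2 : (a : ℕ) < (b : ℕ) generalizing a b
    · have hne' : (a : ℕ) ≠ (b : ℕ) := Fin.val_ne_of_ne hab
      exact this b a hab.symm hfab.symm (by omega)
    · have hchain : 0 < (A ^ ((b : ℕ) - a)) (f a) (f (a + ((b : ℕ) - a))) := by
        apply chain_pos A hA f
        intro t ht1 ht2
        exact hstep t (by omega)
      have hab' : (a : ℕ) + ((b : ℕ) - a) = b := by omega
      rw [hab'] at hchain
      refine ⟨(b : ℕ) - a, f a, by omega, ?_⟩
      rw [← hfab] at hchain
      exact ne_of_gt hchain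
  · rintro ⟨k, i, hk1, hne⟩
    have hpos : 0 < (A ^ k) i i := (pow_nonneg' A hA k i i).lt_of_ne (Ne.symm hne)
    have key : ∀ m : ℕ, 0 < (A ^ (k * (m + 1))) i i := by
      intro m
      induction m with
      | zero => simpa using hpos
      | succ m ih =>
        have he : k * (m + 2) = k * (m + 1) + k := by ring
        rw [he, pow_add]
        exact mul_pos_entry _ _ (pow_nonneg' A hA _) (pow_nonneg' A hA _) ih hpos
    rw [sSup_eq_top]
    intro b hb
    lift b to ℕ using hb.ne
    refine ⟨(k * (b + 1) : ℕ), ⟨k * (b + 1), by nlinarith, ?_, rfl⟩, ?_⟩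
    · intro h0
      have := key b
      rw [h0] at this
      simp at this
    · have hlt3 : b < k * (b + 1) := by nlinarith
      exact_mod_cast hlt3
end

section
/- Let A be an n-by-n complex matrix and B an m-by-m complex matrix that is unitarily similar to a block-shift matrix with k superdiagonal blocks B_1, ..., B_k (zero diagonal blocks). If ‖A^k‖ = ‖A‖^k, then w(A ⊗ B) = ‖A‖·w(B). -/
open scoped Kronecker InnerProductSpace

open scoped ComplexConjugate

set_option maxHeartbeats 1000000

namespace Stmt18

set_option linter.unusedSectionVars false


section Basic
variable {ι : Type*} [Fintype ι] [DecidableEq ι]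

lemma toEuclideanLin_apply' (M : Matrix ι ι ℂ) (x : EuclideanSpace ℂ ι) (i : ι) :
    Matrix.toEuclideanLin M x i = ∑ j, M i j * x j := by
  rfl

lemma q_eq_sum (M : Matrix ι ι ℂ) (x : EuclideanSpace ℂ ι) :
    ⟪x, Matrix.toEuclideanLin M x⟫_ℂ = ∑ i, ∑ j, conj (x i) * (M i j * x j) := by
  simp only [PiLp.inner_apply, RCLike.inner_apply, toEuclideanLin_apply', Finset.mul_sum, Finset.sum_mul]
  exact Finset.sum_congr rfl fun i _ => Finset.sum_congr rfl fun j _ => by ring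

lemma norm_toEuclideanLin_le (M : Matrix ι ι ℂ) (x : EuclideanSpace ℂ ι) :
    ‖Matrix.toEuclideanLin M x‖ ≤ opNorm M * ‖x‖ := by
  have : Matrix.toEuclideanLin M x = Matrix.toEuclideanCLM (𝕜 := ℂ) M x := by
    rw [← Matrix.coe_toEuclideanCLM_eq_toEuclideanLin]; rfl
  rw [this]
  exact (Matrix.toEuclideanCLM (𝕜 := ℂ) M).le_opNorm x

lemma abs_q_le_opNorm (M : Matrix ι ι ℂ) {x : EuclideanSpace ℂ ι} (hx : ‖x‖ = 1) :
    ‖⟪x, Matrix.toEuclideanLin M x⟫_ℂ‖ ≤ opNorm M := by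
  calc ‖⟪x, Matrix.toEuclideanLin M x⟫_ℂ‖ ≤ ‖x‖ * ‖Matrix.toEuclideanLin M x‖ :=
        norm_inner_le_norm _ _
    _ ≤ ‖x‖ * (opNorm M * ‖x‖) := by
        exact mul_le_mul_of_nonneg_left (norm_toEuclideanLin_le M x) (norm_nonneg _)
    _ = opNorm M := by rw [hx]; ring

lemma numRadius_bddAbove (M : Matrix ι ι ℂ) :
    BddAbove {r : ℝ | ∃ x : EuclideanSpace ℂ ι, ‖x‖ = 1 ∧
      r = ‖⟪x, Matrix.toEuclideanLin M x⟫_ℂ‖} := by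
  refine ⟨opNorm M, fun r hr => ?_⟩
  obtain ⟨x, hx, rfl⟩ := hr
  exact abs_q_le_opNorm M hx

lemma abs_q_le_numRadius (M : Matrix ι ι ℂ) {x : EuclideanSpace ℂ ι} (hx : ‖x‖ = 1) :
    ‖⟪x, Matrix.toEuclideanLin M x⟫_ℂ‖ ≤ numRadius M :=
  le_csSup (numRadius_bddAbove M) ⟨x, hx, rfl⟩

lemma abs_q_le_numRadius_smul (M : Matrix ι ι ℂ) (x : EuclideanSpace ℂ ι) :
    ‖⟪x, Matrix.toEuclideanLin M x⟫_ℂ‖ ≤ ‖x‖ ^ 2 * numRadius M := by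
  rcases eq_or_ne x 0 with rfl | hx
  · simp
  · have hxn : ‖x‖ ≠ 0 := norm_ne_zero_iff.mpr hx
    set y : EuclideanSpace ℂ ι := (‖x‖ : ℂ)⁻¹ • x with hy
    have hyn : ‖y‖ = 1 := by
      rw [hy, norm_smul]
      simp [norm_inv, hxn]
    have key : ⟪x, Matrix.toEuclideanLin M x⟫_ℂ
        = (‖x‖ : ℂ) ^ 2 * ⟪y, Matrix.toEuclideanLin M y⟫_ℂ := by
      rw [hy, map_smul, inner_smul_left, inner_smul_right]
      have : (starRingEnd ℂ) ((‖x‖ : ℂ)⁻¹) = (‖x‖ : ℂ)⁻¹ := by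
        simp [Complex.conj_ofReal]
      rw [this]
      have hxc : (‖x‖ : ℂ) ≠ 0 := by exact_mod_cast hxn
      field_simp
    rw [key, norm_mul]
    have h1 := abs_q_le_numRadius M hyn
    have h2 : ‖((‖x‖ : ℂ) ^ 2)‖ = ‖x‖ ^ 2 := by
      simp [norm_pow]
    rw [h2]
    exact mul_le_mul_of_nonneg_left h1 (by positivity)

lemma numRadius_le (M : Matrix ι ι ℂ) {r : ℝ} (hr : 0 ≤ r)
    (h : ∀ x : EuclideanSpace ℂ ι, ‖x‖ = 1 →
      ‖⟪x, Matrix.toEuclideanLin M x⟫_ℂ‖ ≤ r) : numRadius M ≤ r := by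
  apply Real.sSup_le _ hr
  rintro s ⟨x, hx, rfl⟩
  exact h x hx

lemma numRadius_nonneg [Nonempty ι] (M : Matrix ι ι ℂ) : 0 ≤ numRadius M := by
  have : ‖(EuclideanSpace.single (Classical.arbitrary ι) (1:ℂ) : EuclideanSpace ℂ ι)‖ = 1 := by
    simp [EuclideanSpace.norm_single]
  exact le_trans (by positivity) (abs_q_le_numRadius M this)


end Basic




section Two
variable {ι κ : Type*} [Fintype ι] [DecidableEq ι] [Fintype κ] [DecidableEq κ]


/-- the `i`-th row of a vector indexed by a product -/
def rowv (z : EuclideanSpace ℂ (ι × κ)) (i : ι) : EuclideanSpace ℂ κ := WithLp.toLp 2 (fun j => z (i, j))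

/-- the `j`-th column of a vector indexed by a product -/
def colv (z : EuclideanSpace ℂ (ι × κ)) (j : κ) : EuclideanSpace ℂ ι := WithLp.toLp 2 (fun i => z (i, j))

lemma kron_q_row (M : Matrix ι ι ℂ) (N : Matrix κ κ ℂ) (z : EuclideanSpace ℂ (ι × κ)) :
    ⟪z, Matrix.toEuclideanLin (M ⊗ₖ N) z⟫_ℂ
      = ∑ i, ∑ i', M i i' * ⟪rowv z i, Matrix.toEuclideanLin N (rowv z i')⟫_ℂ := by
  simp only [PiLp.inner_apply, RCLike.inner_apply, toEuclideanLin_apply', rowv,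
    Matrix.kroneckerMap_apply, Fintype.sum_prod_type, Finset.mul_sum, Finset.sum_mul]
  refine Finset.sum_congr rfl fun i _ => ?_
  rw [Finset.sum_comm]
  exact Finset.sum_congr rfl fun i' _ => Finset.sum_congr rfl fun j _ =>
    Finset.sum_congr rfl fun j' _ => by ring

lemma kron_q_col (M : Matrix ι ι ℂ) (N : Matrix κ κ ℂ) (z : EuclideanSpace ℂ (ι × κ)) :
    ⟪z, Matrix.toEuclideanLin (M ⊗ₖ N) z⟫_ℂ
      = ∑ j, ∑ j', N j j' * ⟪colv z j, Matrix.toEuclideanLin M (colv z j')⟫_ℂ := by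
  simp only [PiLp.inner_apply, RCLike.inner_apply, toEuclideanLin_apply', colv,
    Matrix.kroneckerMap_apply, Fintype.sum_prod_type, Finset.mul_sum, Finset.sum_mul]
  rw [Finset.sum_comm]
  refine Finset.sum_congr rfl fun j _ => ?_
  have h1 : ∀ F : ι → ι → κ → ℂ,
      (∑ i, ∑ i', ∑ j', F i i' j') = ∑ j', ∑ i, ∑ i', F i i' j' := fun F =>
    (Finset.sum_congr rfl fun i _ => Finset.sum_comm).trans Finset.sum_comm
  rw [h1]
  exact Finset.sum_congr rfl fun j' _ => Finset.sum_congr rfl fun i _ =>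
    Finset.sum_congr rfl fun i' _ => by ring

lemma norm_sq_rowv (z : EuclideanSpace ℂ (ι × κ)) :
    ‖z‖ ^ 2 = ∑ i, ‖rowv z i‖ ^ 2 := by
  simp only [PiLp.norm_sq_eq_of_L2, rowv]
  rw [Fintype.sum_prod_type]

lemma norm_sq_colv (z : EuclideanSpace ℂ (ι × κ)) :
    ‖z‖ ^ 2 = ∑ j, ‖colv z j‖ ^ 2 := by
  simp only [PiLp.norm_sq_eq_of_L2, colv]
  rw [Fintype.sum_prod_type, Finset.sum_comm]


end Two


section SVD
variable {E : Type*} [NormedAddCommGroup E] [InnerProductSpace ℂ E] [FiniteDimensional ℂ E]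

lemma svd_lite {P : Type*} [Fintype P] (c : P → ℂ) (u w : P → E) :
    ∃ (U : E ≃ₗᵢ[ℂ] E) (t : ℝ), 0 ≤ t ∧
      (∀ (S : E →ₗ[ℂ] E) (a : ℝ), 0 ≤ a → (∀ y, ‖S y‖ ≤ a * ‖y‖) →
        ‖∑ p, c p * ⟪u p, S (w p)⟫_ℂ‖ ≤ a * t) ∧
      (∑ p, c p * ⟪u p, U.symm.toLinearIsometry.toLinearMap (w p)⟫_ℂ) = (t : ℂ) := by
  classical
  set X : E →ₗ[ℂ] E :=
    ∑ p, c p • ((LinearMap.toSpanSingleton ℂ E (w p)) ∘ₗ (innerₛₗ ℂ (u p))) with hX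
  have hXapp : ∀ y, X y = ∑ p, (c p * ⟪u p, y⟫_ℂ) • w p := by
    intro y
    simp [hX, LinearMap.sum_apply, LinearMap.smul_apply, LinearMap.toSpanSingleton_apply,
      coe_innerₛₗ_apply, smul_smul]
  -- the key trace identity w.r.t. any orthonormal basis indexed by `Fin N`
  have key : ∀ {N : ℕ} (b : OrthonormalBasis (Fin N) ℂ E) (S : E →ₗ[ℂ] E),
      ∑ p, c p * ⟪u p, S (w p)⟫_ℂ = ∑ i, ⟪(b i : E), S (X (b i))⟫_ℂ := by
    intro N b S
    have step : ∀ i, ⟪(b i : E), S (X (b i))⟫_ℂ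
        = ∑ p, c p * (⟪u p, (b i : E)⟫_ℂ * ⟪(b i : E), S (w p)⟫_ℂ) := by
      intro i
      rw [hXapp, map_sum, inner_sum]
      refine Finset.sum_congr rfl fun p _ => ?_
      rw [map_smul, inner_smul_right]
      ring
    simp_rw [step]
    rw [Finset.sum_comm]
    refine Finset.sum_congr rfl fun p _ => ?_
    rw [← Finset.mul_sum, b.sum_inner_mul_inner]
  have hsym : ((LinearMap.adjoint X) * X).IsSymmetric := LinearMap.isSymmetric_adjoint_mul_self X
  set N := Module.finrank ℂ E with hNdef
  have hN : Module.finrank ℂ E = N := rfl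
  set b := hsym.eigenvectorBasis hN with hb
  set μ := hsym.eigenvalues hN with hμ
  have heig : ∀ i, (LinearMap.adjoint X) (X (b i)) = (μ i : ℂ) • (b i : E) := by
    intro i
    have h := hsym.apply_eigenvectorBasis hN i
    rw [Module.End.mul_apply] at h
    exact h
  have honb : ∀ i j : Fin N, ⟪(b i : E), (b j : E)⟫_ℂ = if i = j then 1 else 0 :=
    orthonormal_iff_ite.mp b.orthonormal
  have hXb : ∀ i j, ⟪X (b i), X (b j)⟫_ℂ = if i = j then (μ j : ℂ) else 0 := by
    intro i j
    rw [← LinearMap.adjoint_inner_right, heig, inner_smul_right, honb]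
    rcases eq_or_ne i j with rfl | hij
    · simp
    · simp [hij]
  set s : Fin N → ℝ := fun i => ‖X (b i)‖ with hs
  have hs2 : ∀ i, ((s i : ℂ)) ^ 2 = (μ i : ℂ) := by
    intro i
    have h1 := hXb i i
    rw [if_pos rfl] at h1
    rw [← h1, inner_self_eq_norm_sq_to_K]
    simp [hs]
  set v : Fin N → E := fun i => (s i : ℂ)⁻¹ • X (b i) with hv
  set sset : Set (Fin N) := {i | X (b i) ≠ 0} with hsset
  have hsne : ∀ i ∈ sset, s i ≠ 0 := fun i hi => by
    have hi' : X (b i) ≠ 0 := hi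
    simpa [hs] using hi'
  have hvinner : ∀ i j, i ∈ sset → j ∈ sset →
      ⟪v i, v j⟫_ℂ = if i = j then 1 else 0 := by
    intro i j hi hj
    rw [hv]
    simp only [inner_smul_left, inner_smul_right, hXb]
    rcases eq_or_ne i j with rfl | hij
    · rw [if_pos rfl, if_pos rfl]
      have : (starRingEnd ℂ) ((s i : ℂ))⁻¹ = ((s i : ℂ))⁻¹ := by
        simp [Complex.conj_ofReal]
      rw [this, ← hs2 i]
      have hsi : (s i : ℂ) ≠ 0 := by exact_mod_cast hsne i hi
      field_simp
    · rw [if_neg hij, if_neg hij]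
      ring
  have hortho : Orthonormal ℂ (sset.restrict v) := by
    rw [orthonormal_iff_ite]
    intro i j
    show ⟪v i, v j⟫_ℂ = if i = j then 1 else 0
    rcases eq_or_ne i j with rfl | hij
    · rw [hvinner i i i.2 i.2, if_pos rfl, if_pos rfl]
    · have : (i : Fin N) ≠ (j : Fin N) := fun h => hij (Subtype.ext h)
      rw [hvinner i j i.2 j.2, if_neg this, if_neg hij]
  have hcard : Module.finrank ℂ E = Fintype.card (Fin N) := by simp [hN]
  obtain ⟨cb, hcb⟩ := hortho.exists_orthonormalBasis_extension_of_card_eq hcard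
  set U : E ≃ₗᵢ[ℂ] E := b.repr.trans cb.repr.symm with hU
  have hUb : ∀ i, U (b i) = cb i := by
    intro i
    rw [hU, LinearIsometryEquiv.trans_apply, b.repr_self, cb.repr_symm_single]
  refine ⟨U, ∑ i, s i, Finset.sum_nonneg fun i _ => norm_nonneg _, ?_, ?_⟩
  · intro S a ha hSa
    rw [key b S]
    calc ‖∑ i, ⟪(b i : E), S (X (b i))⟫_ℂ‖ ≤ ∑ i, ‖⟪(b i : E), S (X (b i))⟫_ℂ‖ :=
          norm_sum_le _ _
      _ ≤ ∑ i, a * s i := by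
          refine Finset.sum_le_sum fun i _ => ?_
          calc ‖⟪(b i : E), S (X (b i))⟫_ℂ‖ ≤ ‖(b i : E)‖ * ‖S (X (b i))‖ :=
                norm_inner_le_norm _ _
            _ ≤ 1 * (a * s i) := by
                rw [b.orthonormal.1 i]
                exact mul_le_mul_of_nonneg_left (hSa _) zero_le_one
            _ = a * s i := one_mul _
      _ = a * ∑ i, s i := by rw [Finset.mul_sum]
  · rw [key b _]
    have hterm : ∀ i, ⟪(b i : E), U.symm.toLinearIsometry.toLinearMap (X (b i))⟫_ℂ
        = (s i : ℂ) := by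
      intro i
      have hflip : ⟪(b i : E), U.symm (X (b i))⟫_ℂ = ⟪U (b i), X (b i)⟫_ℂ := by
        conv_rhs => rw [show X (b i) = U (U.symm (X (b i))) from (U.apply_symm_apply _).symm,
          LinearIsometryEquiv.inner_map_map]
      have : U.symm.toLinearIsometry.toLinearMap (X (b i)) = U.symm (X (b i)) := rfl
      rw [this, hflip, hUb]
      by_cases hi : i ∈ sset
      · rw [hcb i hi]
        have hXbi : X (b i) = (s i : ℂ) • v i := by
          rw [hv]
          have hsi : (s i : ℂ) ≠ 0 := by exact_mod_cast hsne i hi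
          rw [smul_inv_smul₀ hsi]
        rw [hXbi, inner_smul_right, hvinner i i hi hi, if_pos rfl, mul_one]
      · have hXbi : X (b i) = 0 := by simpa [hsset] using hi
        have hsi : s i = 0 := by simp [hs, hXbi]
        rw [hXbi, inner_zero_right, hsi, Complex.ofReal_zero]
    rw [Finset.sum_congr rfl fun i _ => hterm i]
    push_cast
    rfl


end SVD


section Two
variable {ι κ : Type*} [Fintype ι] [DecidableEq ι] [Fintype κ] [DecidableEq κ]

lemma colsum_eq_rowq (C : Matrix κ κ ℂ) (y : EuclideanSpace ℂ (ι × κ)) :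
    ∑ j, ∑ j', C j j' * ⟪colv y j, colv y j'⟫_ℂ
      = ∑ i, ⟪rowv y i, Matrix.toEuclideanLin C (rowv y i)⟫_ℂ := by
  simp only [PiLp.inner_apply, RCLike.inner_apply, toEuclideanLin_apply',
    colv, rowv, Finset.mul_sum, Finset.sum_mul]
  have h1 : ∀ F : κ → κ → ι → ℂ,
      (∑ j, ∑ j', ∑ i, F j j' i) = ∑ i, ∑ j, ∑ j', F j j' i := fun F =>
    (Finset.sum_congr rfl fun j _ => Finset.sum_comm).trans Finset.sum_comm
  rw [h1]
  exact Finset.sum_congr rfl fun i _ => Finset.sum_congr rfl fun j _ =>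
    Finset.sum_congr rfl fun j' _ => by ring

end Two

section Upper

variable {ι κ : Type*} [Fintype ι] [DecidableEq ι] [Fintype κ] [DecidableEq κ]

lemma upper_bound (A : Matrix ι ι ℂ) (C : Matrix κ κ ℂ) (f : κ → ℕ) (k : ℕ)
    (hf : ∀ j, f j ≤ k) (hC : ∀ i j, (f j) ≠ f i + 1 → C i j = 0)
    {z : EuclideanSpace ℂ (ι × κ)} (hz : ‖z‖ = 1) :
    ‖⟪z, Matrix.toEuclideanLin (A ⊗ₖ C) z⟫_ℂ‖ ≤ opNorm A * numRadius C := by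
  classical
  set T := Matrix.toEuclideanLin A with hTdef
  set a := opNorm A with hadef
  have ha : 0 ≤ a := norm_nonneg _
  have hT : ∀ y, ‖T y‖ ≤ a * ‖y‖ := norm_toEuclideanLin_le A
  have Hsvd := fun l : ℕ => svd_lite
    (fun p : κ × κ => if f p.1 = l then C p.1 p.2 else 0)
    (fun p => colv z p.1) (fun p => colv z p.2)
  choose U t ht0 hbd hval using Hsvd
  set W : ℕ → (EuclideanSpace ℂ ι ≃ₗᵢ[ℂ] EuclideanSpace ℂ ι) :=
    fun l => Nat.rec (LinearIsometryEquiv.refl ℂ _) (fun l' W' => (U l').symm.trans W') l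
    with hWdef
  have hWs : ∀ l, W (l+1) = (U l).symm.trans (W l) := fun l => rfl
  set y : EuclideanSpace ℂ (ι × κ) :=
    WithLp.toLp 2 (fun p : ι × κ => (W (f p.2) (colv z p.2)) p.1 : (ι × κ) → ℂ) with hydef
  have hycol : ∀ j, colv y j = W (f j) (colv z j) := fun j => rfl
  -- level decomposition
  have K1 : ∀ g : κ → κ → ℂ,
      (∑ j, ∑ j', C j j' * g j j')
        = ∑ l ∈ Finset.range (k+1), ∑ p : κ × κ,
            (if f p.1 = l then C p.1 p.2 else 0) * g p.1 p.2 := by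
    intro g
    conv_rhs => rw [Finset.sum_comm]
    have hps : (∑ p : κ × κ, C p.1 p.2 * g p.1 p.2) = ∑ j, ∑ j', C j j' * g j j' :=
      Fintype.sum_prod_type _
    rw [← hps]
    refine Finset.sum_congr rfl fun p _ => ?_
    symm
    have : ∀ l, (if f p.1 = l then C p.1 p.2 else 0) * g p.1 p.2
        = (if f p.1 = l then C p.1 p.2 * g p.1 p.2 else 0) := by
      intro l; split <;> simp
    rw [Finset.sum_congr rfl fun l _ => this l, Finset.sum_ite_eq (Finset.range (k+1))]
    rw [if_pos (Finset.mem_range.mpr (Nat.lt_succ_of_le (hf p.1)))]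
  -- value of each level on y
  have K2 : ∀ l, (∑ p : κ × κ, (if f p.1 = l then C p.1 p.2 else 0)
      * ⟪colv y p.1, colv y p.2⟫_ℂ) = ((t l : ℝ) : ℂ) := by
    intro l
    rw [← hval l]
    refine Finset.sum_congr rfl fun p _ => ?_
    by_cases h1 : f p.1 = l
    · by_cases h2 : C p.1 p.2 = 0
      · simp [h2]
      · have hf2 : f p.2 = f p.1 + 1 := by
          by_contra h
          exact h2 (hC p.1 p.2 h)
        congr 1
        rw [hycol, hycol, h1, hf2, h1, hWs l, LinearIsometryEquiv.trans_apply,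
          LinearIsometryEquiv.inner_map_map]
        rfl
    · simp [h1]
  -- sum of t's is bounded by the numerical radius of C
  have hsumt : ∑ l ∈ Finset.range (k+1), t l ≤ numRadius C := by
    have K3 : (∑ j, ∑ j', C j j' * ⟪colv y j, colv y j'⟫_ℂ)
        = ((∑ l ∈ Finset.range (k+1), t l : ℝ) : ℂ) := by
      rw [K1 (fun j j' => ⟪colv y j, colv y j'⟫_ℂ)]
      rw [Finset.sum_congr rfl fun l _ => K2 l]
      push_cast
      rfl
    have hynorm : ∑ i, ‖rowv y i‖ ^ 2 = 1 := by
      rw [← norm_sq_rowv, norm_sq_colv]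
      have hcz : ∀ j, ‖colv y j‖ = ‖colv z j‖ := fun j => by
        rw [hycol]; exact (W (f j)).norm_map _
      rw [Finset.sum_congr rfl fun j _ => by rw [hcz j], ← norm_sq_colv, hz, one_pow]
    have hre : (∑ l ∈ Finset.range (k+1), t l)
        = (∑ i, ⟪rowv y i, Matrix.toEuclideanLin C (rowv y i)⟫_ℂ).re := by
      rw [← colsum_eq_rowq, K3, Complex.ofReal_re]
    rw [hre]
    calc (∑ i, ⟪rowv y i, Matrix.toEuclideanLin C (rowv y i)⟫_ℂ).re
        ≤ ∑ i, ‖rowv y i‖ ^ 2 * numRadius C := by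
          rw [Complex.re_sum]
          refine Finset.sum_le_sum fun i _ => ?_
          exact le_trans (Complex.re_le_norm _) (abs_q_le_numRadius_smul C (rowv y i))
      _ = numRadius C := by
          rw [← Finset.sum_mul, hynorm, one_mul]
  -- main estimate
  rw [kron_q_col, K1 (fun j j' => ⟪colv z j, T (colv z j')⟫_ℂ)]
  calc ‖∑ l ∈ Finset.range (k+1), ∑ p : κ × κ,
        (if f p.1 = l then C p.1 p.2 else 0) * ⟪colv z p.1, T (colv z p.2)⟫_ℂ‖
      ≤ ∑ l ∈ Finset.range (k+1), ‖∑ p : κ × κ,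
        (if f p.1 = l then C p.1 p.2 else 0) * ⟪colv z p.1, T (colv z p.2)⟫_ℂ‖ :=
        norm_sum_le _ _
    _ ≤ ∑ l ∈ Finset.range (k+1), a * t l := by
        refine Finset.sum_le_sum fun l _ => ?_
        exact hbd l T a ha hT
    _ = a * ∑ l ∈ Finset.range (k+1), t l := by rw [Finset.mul_sum]
    _ ≤ a * numRadius C := mul_le_mul_of_nonneg_left hsumt ha

end Upper

section Lower

variable {ι κ : Type*} [Fintype ι] [DecidableEq ι] [Fintype κ] [DecidableEq κ]

lemma numRadius_nonneg' (M : Matrix ι ι ℂ) : 0 ≤ numRadius M := by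
  rcases Set.eq_empty_or_nonempty {r : ℝ | ∃ x : EuclideanSpace ℂ ι, ‖x‖ = 1 ∧
      r = ‖⟪x, Matrix.toEuclideanLin M x⟫_ℂ‖} with h | h
  · unfold numRadius
    rw [h, Real.sSup_empty]
  · obtain ⟨r, x, hx, rfl⟩ := h
    exact le_trans (norm_nonneg _) (abs_q_le_numRadius M hx)

lemma exists_norm_attained [Nonempty ι]
    (T : EuclideanSpace ℂ ι →L[ℂ] EuclideanSpace ℂ ι) :
    ∃ x : EuclideanSpace ℂ ι, ‖x‖ = 1 ∧ ‖T x‖ = ‖T‖ := by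
  haveI : Nontrivial (EuclideanSpace ℂ ι) := by
    refine ⟨EuclideanSpace.single (Classical.arbitrary ι) (1:ℂ), 0, fun h => ?_⟩
    have h1 : ‖(EuclideanSpace.single (Classical.arbitrary ι) (1:ℂ) :
        EuclideanSpace ℂ ι)‖ = 1 := by simp [EuclideanSpace.norm_single]
    rw [h] at h1
    simp at h1
  obtain ⟨x, hxs, hmax'⟩ := (isCompact_sphere (0 : EuclideanSpace ℂ ι) 1).exists_isMaxOn
    (NormedSpace.sphere_nonempty.mpr zero_le_one) (T.continuous.norm.continuousOn)
  have hmax : ∀ y ∈ Metric.sphere (0 : EuclideanSpace ℂ ι) 1, ‖T y‖ ≤ ‖T x‖ :=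
    fun y hy => hmax' hy
  have hx1 : ‖x‖ = 1 := by simpa using mem_sphere_zero_iff_norm.mp hxs
  refine ⟨x, hx1, le_antisymm (by simpa [hx1] using T.le_opNorm x) ?_⟩
  refine T.opNorm_le_bound (norm_nonneg _) fun y => ?_
  rcases eq_or_ne y 0 with rfl | hy
  · simp
  · have hyn : ‖y‖ ≠ 0 := norm_ne_zero_iff.mpr hy
    set y' : EuclideanSpace ℂ ι := (‖y‖ : ℂ)⁻¹ • y with hy'
    have hy'1 : ‖y'‖ = 1 := by
      rw [hy', norm_smul]
      simp [hyn]
    have hmem : y' ∈ Metric.sphere (0 : EuclideanSpace ℂ ι) 1 :=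
      mem_sphere_zero_iff_norm.mpr hy'1
    have := hmax y' hmem
    rw [hy', map_smul, norm_smul] at this
    simp only [norm_inv, Complex.norm_real, Real.norm_eq_abs, abs_norm] at this
    calc ‖T y‖ = ‖y‖ * (‖y‖⁻¹ * ‖T y‖) := by field_simp
      _ ≤ ‖y‖ * ‖T x‖ := by
          refine mul_le_mul_of_nonneg_left ?_ (norm_nonneg _)
          simpa [Complex.norm_real] using this
      _ = ‖T x‖ * ‖y‖ := mul_comm _ _

lemma lower_bound [Nonempty κ] (A : Matrix ι ι ℂ) (C : Matrix κ κ ℂ) (f : κ → ℕ) (k : ℕ)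
    (hf : ∀ j, f j ≤ k) (hC : ∀ i j, (f j) ≠ f i + 1 → C i j = 0)
    (hA : opNorm (A ^ k) = opNorm A ^ k) :
    opNorm A * numRadius C ≤ numRadius (A ⊗ₖ C) := by
  classical
  rcases eq_or_ne (opNorm A) 0 with h0 | h0
  · rw [h0, zero_mul]
    exact numRadius_nonneg' _
  have ha : 0 < opNorm A := lt_of_le_of_ne (norm_nonneg _) (Ne.symm h0)
  set a := opNorm A with hadef
  -- nonempty ι, else opNorm A = 0
  haveI : Nonempty ι := by
    by_contra hni
    rw [not_nonempty_iff] at hni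
    apply h0
    have h00 : Matrix.toEuclideanCLM (𝕜 := ℂ) A = 0 := by
      ext x i
      exact (hni.false i).elim
    show ‖Matrix.toEuclideanCLM (𝕜 := ℂ) A‖ = 0
    rw [h00, norm_zero]
  set T := Matrix.toEuclideanCLM (𝕜 := ℂ) A with hTdef
  have hTL : ∀ v, Matrix.toEuclideanLin A v = T v := fun v => rfl
  have hTk : ‖T ^ k‖ = a ^ k := by
    rw [hTdef, ← map_pow]
    exact hA
  obtain ⟨x, hx1, hxk⟩ := exists_norm_attained (T ^ k)
  have hxk' : ‖(T ^ k) x‖ = a ^ k := by rw [hxk, hTk]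
  have hTpow : ∀ j : ℕ, ‖T ^ j‖ ≤ a ^ j := by
    intro j
    rcases Nat.eq_zero_or_pos j with rfl | hj
    · simp
    · exact norm_pow_le' T hj
  have hTj : ∀ j, j ≤ k → ‖(T ^ j) x‖ = a ^ j := by
    intro j hj
    have hle : ‖(T ^ j) x‖ ≤ a ^ j := by
      calc ‖(T ^ j) x‖ ≤ ‖T ^ j‖ * ‖x‖ := (T ^ j).le_opNorm x
        _ = ‖T ^ j‖ := by rw [hx1, mul_one]
        _ ≤ a ^ j := hTpow j
    have hge : a ^ j ≤ ‖(T ^ j) x‖ := by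
      have hsplit : (T ^ (k - j)) ((T ^ j) x) = (T ^ k) x := by
        rw [← ContinuousLinearMap.mul_apply, pow_sub_mul_pow T hj]
      have : a ^ k ≤ a ^ (k - j) * ‖(T ^ j) x‖ := by
        calc a ^ k = ‖(T ^ k) x‖ := hxk'.symm
          _ = ‖(T ^ (k - j)) ((T ^ j) x)‖ := by rw [hsplit]
          _ ≤ ‖T ^ (k - j)‖ * ‖(T ^ j) x‖ := (T ^ (k - j)).le_opNorm _
          _ ≤ a ^ (k - j) * ‖(T ^ j) x‖ :=
              mul_le_mul_of_nonneg_right (hTpow _) (norm_nonneg _)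
      have hk : a ^ (k - j) * a ^ j = a ^ k := by
        rw [← pow_add]
        congr 1
        omega
      have hpos : 0 < a ^ (k - j) := pow_pos ha _
      nlinarith
    linarith
  set yy : ℕ → EuclideanSpace ℂ ι := fun l => ((a : ℂ) ^ (k - l))⁻¹ • ((T ^ (k - l)) x)
    with hyydef
  have haC : (a : ℂ) ≠ 0 := by exact_mod_cast ne_of_gt ha
  have hyy1 : ∀ l, l ≤ k → ‖yy l‖ = 1 := by
    intro l hl
    rw [hyydef]
    simp only [norm_smul, norm_inv, norm_pow, Complex.norm_real]
    rw [hTj (k - l) (Nat.sub_le _ _)]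
    rw [Real.norm_eq_abs, abs_of_pos ha]
    field_simp
  have hTyy : ∀ l, l + 1 ≤ k → T (yy (l + 1)) = (a : ℂ) • yy l := by
    intro l hl
    have e1 : k - (l + 1) + 1 = k - l := by omega
    rw [hyydef]
    simp only [map_smul]
    have : T ((T ^ (k - (l + 1))) x) = (T ^ (k - l)) x := by
      rw [← ContinuousLinearMap.mul_apply, ← pow_succ', e1]
    rw [this, smul_smul]
    congr 1
    have : (a : ℂ) ^ (k - l) = (a : ℂ) ^ (k - (l + 1)) * a := by
      rw [← pow_succ, e1]
    rw [this]
    field_simp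
  have hip : ∀ l, l + 1 ≤ k → ⟪yy l, T (yy (l + 1))⟫_ℂ = (a : ℂ) := by
    intro l hl
    rw [hTyy l hl, inner_smul_right, inner_self_eq_norm_sq_to_K,
      hyy1 l (by omega)]
    simp
  -- approximation argument
  refine le_of_forall_pos_le_add fun ε hε => ?_
  have hne : {r : ℝ | ∃ u : EuclideanSpace ℂ κ, ‖u‖ = 1 ∧
      r = ‖⟪u, Matrix.toEuclideanLin C u⟫_ℂ‖}.Nonempty := by
    refine ⟨_, EuclideanSpace.single (Classical.arbitrary κ) (1:ℂ), ?_, rfl⟩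
    simp [EuclideanSpace.norm_single]
  have hlt : numRadius C - ε / a < numRadius C := by
    have : 0 < ε / a := div_pos hε ha
    linarith
  obtain ⟨r, hrs, hrgt⟩ := exists_lt_of_lt_csSup hne hlt
  obtain ⟨u, hu1, rfl⟩ := hrs
  -- the test vector
  set z : EuclideanSpace ℂ (ι × κ) := WithLp.toLp 2 (fun p : ι × κ => u p.2 * yy (f p.2) p.1 : (ι × κ) → ℂ)
    with hzdef
  have hzcol : ∀ j, colv z j = u j • yy (f j) := fun j => rfl
  have hz1 : ‖z‖ = 1 := by
    have hsq : ‖z‖ ^ 2 = 1 := by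
      rw [norm_sq_colv]
      have : ∀ j, ‖colv z j‖ ^ 2 = ‖u j‖ ^ 2 := by
        intro j
        rw [hzcol, norm_smul, hyy1 (f j) (hf j), mul_one]
      rw [Finset.sum_congr rfl fun j _ => this j]
      have := PiLp.norm_sq_eq_of_L2 (fun _ : κ => ℂ) u
      rw [← this, hu1, one_pow]
    rw [← Real.sqrt_sq (norm_nonneg z), hsq, Real.sqrt_one]
  have hqz : ⟪z, Matrix.toEuclideanLin (A ⊗ₖ C) z⟫_ℂ
      = (a : ℂ) * ⟪u, Matrix.toEuclideanLin C u⟫_ℂ := by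
    rw [kron_q_col, q_eq_sum, Finset.mul_sum]
    refine Finset.sum_congr rfl fun j _ => ?_
    rw [Finset.mul_sum]
    refine Finset.sum_congr rfl fun j' _ => ?_
    by_cases hc : C j j' = 0
    · simp [hc]
    · have hf2 : f j' = f j + 1 := by
        by_contra h
        exact hc (hC j j' h)
      have hfk : f j + 1 ≤ k := by
        rw [← hf2]
        exact hf j'
      rw [hzcol, hzcol, hTL, map_smul, inner_smul_left, inner_smul_right, hf2,
        hip (f j) hfk]
      ring
  have hest := abs_q_le_numRadius (A ⊗ₖ C) hz1
  rw [hqz, norm_mul] at hest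
  have haa : ‖((a : ℂ))‖ = a := by
    rw [Complex.norm_real, Real.norm_eq_abs, abs_of_pos ha]
  rw [haa] at hest
  have : a * (numRadius C - ε / a) ≤ a * ‖⟪u, Matrix.toEuclideanLin C u⟫_ℂ‖ :=
    mul_le_mul_of_nonneg_left (le_of_lt hrgt) (le_of_lt ha)
  have hfin : a * numRadius C - ε ≤ numRadius (A ⊗ₖ C) := by
    have harith : a * (numRadius C - ε / a) = a * numRadius C - ε := by
      field_simp
    linarith
  linarith

end Lower

section Transport

variable {ι κ : Type*} [Fintype ι] [DecidableEq ι] [Fintype κ] [DecidableEq κ]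

lemma unitSim_symm {M : Matrix ι ι ℂ} {N : Matrix κ κ ℂ} (h : UnitSim M N) : UnitSim N M := by
  obtain ⟨e, he⟩ := h
  refine ⟨e.symm, fun y => ?_⟩
  have := he (e.symm y)
  rw [e.apply_symm_apply] at this
  rw [this, e.symm_apply_apply]

lemma numRadius_le_unitSim {M : Matrix ι ι ℂ} {N : Matrix κ κ ℂ} (h : UnitSim M N) :
    numRadius M ≤ numRadius N := by
  obtain ⟨e, he⟩ := h
  refine numRadius_le M (numRadius_nonneg' N) fun x hx => ?_
  have hq : ⟪e x, Matrix.toEuclideanLin N (e x)⟫_ℂ = ⟪x, Matrix.toEuclideanLin M x⟫_ℂ := by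
    rw [he, LinearIsometryEquiv.inner_map_map]
  rw [← hq]
  exact abs_q_le_numRadius N (by rw [e.norm_map, hx])

lemma numRadius_unitSim {M : Matrix ι ι ℂ} {N : Matrix κ κ ℂ} (h : UnitSim M N) :
    numRadius M = numRadius N :=
  le_antisymm (numRadius_le_unitSim h) (numRadius_le_unitSim (unitSim_symm h))

lemma numRadius_kron_le_unitSim (M : Matrix ι ι ℂ) {N N' : Matrix κ κ ℂ}
    (h : UnitSim N N') : numRadius (M ⊗ₖ N) ≤ numRadius (M ⊗ₖ N') := by
  obtain ⟨e, he⟩ := h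
  refine numRadius_le _ (numRadius_nonneg' _) fun z hz => ?_
  set z' : EuclideanSpace ℂ (ι × κ) := WithLp.toLp 2 (fun p : ι × κ => e (rowv z p.1) p.2 : (ι × κ) → ℂ)
    with hz'def
  have hrow : ∀ i, rowv z' i = e (rowv z i) := fun i => rfl
  have hz'1 : ‖z'‖ = 1 := by
    have hsq : ‖z'‖ ^ 2 = 1 := by
      rw [norm_sq_rowv]
      have : ∀ i, ‖rowv z' i‖ ^ 2 = ‖rowv z i‖ ^ 2 := fun i => by rw [hrow, e.norm_map]
      rw [Finset.sum_congr rfl fun i _ => this i, ← norm_sq_rowv, hz, one_pow]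
    rw [← Real.sqrt_sq (norm_nonneg z'), hsq, Real.sqrt_one]
  have hq : ⟪z', Matrix.toEuclideanLin (M ⊗ₖ N') z'⟫_ℂ
      = ⟪z, Matrix.toEuclideanLin (M ⊗ₖ N) z⟫_ℂ := by
    rw [kron_q_row, kron_q_row]
    refine Finset.sum_congr rfl fun i _ => Finset.sum_congr rfl fun i' _ => ?_
    rw [hrow, hrow, he, LinearIsometryEquiv.inner_map_map]
  rw [← hq]
  exact abs_q_le_numRadius _ hz'1

lemma numRadius_kron_unitSim (M : Matrix ι ι ℂ) {N N' : Matrix κ κ ℂ}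
    (h : UnitSim N N') : numRadius (M ⊗ₖ N) = numRadius (M ⊗ₖ N') :=
  le_antisymm (numRadius_kron_le_unitSim M h) (numRadius_kron_le_unitSim M (unitSim_symm h))

end Transport

end Stmt18

theorem stmt18 (n m k : ℕ) (A : Matrix (Fin n) (Fin n) ℂ) (B : Matrix (Fin m) (Fin m) ℂ)
    (hshift : ∃ (C : Matrix (Fin m) (Fin m) ℂ) (f : Fin m → ℕ), UnitSim B C ∧
      (∀ i, f i ≤ k) ∧ ∀ i j, (f j : ℕ) ≠ f i + 1 → C i j = 0)
    (hA : opNorm (A ^ k) = opNorm A ^ k) :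
    numRadius (A ⊗ₖ B) = opNorm A * numRadius B := by
  obtain ⟨C, f, hsim, hf, hC⟩ := hshift
  rcases Nat.eq_zero_or_pos m with rfl | hm
  · have hempty : ∀ {ι : Type} [Fintype ι] [DecidableEq ι] [IsEmpty ι]
        (M : Matrix ι ι ℂ), numRadius M = 0 := by
      intro ι _ _ _ M
      unfold numRadius
      convert Real.sSup_empty using 2
      ext r
      simp only [Set.mem_empty_iff_false, iff_false, Set.mem_setOf_eq, not_exists]
      rintro x ⟨hx, -⟩
      have : ‖x‖ = 0 := by
        simp [EuclideanSpace.norm_eq]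
      rw [this] at hx
      norm_num at hx
    haveI : IsEmpty (Fin n × Fin 0) := by infer_instance
    rw [hempty, hempty, mul_zero]
  · haveI : Nonempty (Fin m) := ⟨⟨0, hm⟩⟩
    rw [Stmt18.numRadius_unitSim hsim, Stmt18.numRadius_kron_unitSim A hsim]
    refine le_antisymm ?_ (Stmt18.lower_bound A C f k hf hC hA)
    refine Stmt18.numRadius_le _ ?_ fun z hz => Stmt18.upper_bound A C f k hf hC hz
    exact mul_nonneg (norm_nonneg _) (Stmt18.numRadius_nonneg' C)
end
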